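/- arXiv:2203.08882 — 8 statements merged into one kernel-verified Lean document; each statement's English description precedes it below -/
import Mathlib

section
/- For two Hermitian matrices H₀ and H₁ = H₀ + V on a finite-dimensional complex Hilbert space and any β ≥ 0, the free-energy difference ΔA(β) := -(1/β)·ln(tr(exp(-β H₁))/tr(exp(-β H₀))) satisfies |ΔA(β)| ≤ ‖V‖, where ‖V‖ is the operator norm of V. Equivalently, e^{-β‖V‖} ≤ tr(exp(-β H₁))/tr(exp(-β H₀)) ≤ e^{β‖V‖}. -/
set_option synthInstance.maxHeartbeats 1000000
set_option maxHeartbeats 1000000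
open scoped InnerProductSpace


open scoped BigOperators

/-- Partition function `Z(β) = tr (exp (-β H))` (real part; the trace of the
exponential of a Hermitian operator is real). -/
noncomputable def partitionFun {N : ℕ}
    (β : ℝ) (H : EuclideanSpace ℂ (Fin N) →L[ℂ] EuclideanSpace ℂ (Fin N)) : ℝ :=
  (LinearMap.trace ℂ (EuclideanSpace ℂ (Fin N))
    (NormedSpace.exp (((-β : ℝ) : ℂ) • H)).toLinearMap).re

section Aux

variable {E : Type*} [NormedAddCommGroup E] [InnerProductSpace ℂ E]

lemma exp_apply_eigen_aux [CompleteSpace E] (A : E →L[ℂ] E) (c : ℂ) (v : E) (hv : A v = c • v) :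
    NormedSpace.exp A v = Complex.exp c • v := by
  have hpow : ∀ n : ℕ, (A ^ n) v = c ^ n • v := by
    intro n
    induction n with
    | zero => simp
    | succ n ih =>
      rw [pow_succ, ContinuousLinearMap.mul_apply, hv, map_smul, ih, smul_smul, pow_succ,
        mul_comm]
  have h1 : HasSum (fun n : ℕ => ((n.factorial : ℂ))⁻¹ • A ^ n) (NormedSpace.exp A) :=
    NormedSpace.exp_series_hasSum_exp' A
  have h2 := h1.mapL (ContinuousLinearMap.apply ℂ E v)
  simp only [ContinuousLinearMap.apply_apply, ContinuousLinearMap.smul_apply, hpow] at h2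
  have h3 : HasSum (fun n : ℕ => ((n.factorial : ℂ))⁻¹ • c ^ n) (Complex.exp c) := by
    simpa [Complex.exp_eq_exp_ℂ] using NormedSpace.exp_series_hasSum_exp' (𝕂 := ℂ) c
  have h4 := h3.smul_const v
  simp only [smul_assoc] at h4
  exact h2.unique h4

lemma trace_eq_sum_inner_aux {n : ℕ} (b : OrthonormalBasis (Fin n) ℂ E) (T : E →ₗ[ℂ] E) :
    LinearMap.trace ℂ E T = ∑ i, ⟪b i, T (b i)⟫_ℂ := by
  rw [LinearMap.trace_eq_matrix_trace ℂ b.toBasis T, Matrix.trace]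
  congr 1
  ext i
  rw [Matrix.diag_apply, LinearMap.toMatrix_apply, OrthonormalBasis.coe_toBasis_repr_apply,
    OrthonormalBasis.repr_apply_apply, OrthonormalBasis.coe_toBasis]

/-- inner product against a vector for an operator diagonal in an orthonormal basis with
real eigenvalues. -/
lemma re_inner_diag {n : ℕ} (b : OrthonormalBasis (Fin n) ℂ E)
    (T : E →L[ℂ] E) (c : Fin n → ℝ) (hc : ∀ i, T (b i) = ((c i : ℝ) : ℂ) • b i) (v : E) :
    (⟪v, T v⟫_ℂ).re = ∑ i, c i * ‖⟪b i, v⟫_ℂ‖ ^ 2 := by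
  have hv : T v = ∑ i, ⟪b i, v⟫_ℂ • (((c i : ℝ) : ℂ) • b i) := by
    conv_lhs => rw [← b.sum_repr' v]
    rw [map_sum]
    exact Finset.sum_congr rfl fun i _ => by rw [map_smul, hc i]
  rw [hv, inner_sum]
  rw [Complex.re_sum]
  refine Finset.sum_congr rfl fun i _ => ?_
  rw [inner_smul_right, inner_smul_right]
  have hz : ⟪v, b i⟫_ℂ = (starRingEnd ℂ) ⟪b i, v⟫_ℂ := by rw [← inner_conj_symm]
  rw [hz]
  have h1 : ⟪b i, v⟫_ℂ * (((c i : ℝ) : ℂ) * (starRingEnd ℂ) ⟪b i, v⟫_ℂ)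
      = ((c i : ℝ) : ℂ) * (⟪b i, v⟫_ℂ * (starRingEnd ℂ) ⟪b i, v⟫_ℂ) := by ring
  rw [h1, Complex.mul_conj']
  rw [show ((c i : ℝ) : ℂ) * ((‖⟪b i, v⟫_ℂ‖ : ℝ) : ℂ) ^ 2
      = ((c i * ‖⟪b i, v⟫_ℂ‖ ^ 2 : ℝ) : ℂ) by push_cast; ring, Complex.ofReal_re]

lemma parseval_one_aux {n : ℕ} (b : OrthonormalBasis (Fin n) ℂ E) (v : E) (hv : ‖v‖ = 1) :
    ∑ i, ‖⟪b i, v⟫_ℂ‖ ^ 2 = 1 := by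
  have h := re_inner_diag b 1 (fun _ => (1 : ℝ)) (fun i => by simp) v
  simp only [one_mul] at h
  rw [← h, ContinuousLinearMap.one_apply, inner_self_eq_norm_sq_to_K]
  rw [hv]
  norm_num

/-- Peierls–Bogoliubov inequality: `exp (r⟪v, Hv⟫) ≤ ⟪v, exp (rH) v⟫` for a unit vector `v`. -/
lemma peierls_aux {n : ℕ} [CompleteSpace E] (b : OrthonormalBasis (Fin n) ℂ E)
    (H : E →L[ℂ] E) (μ : Fin n → ℝ) (hb : ∀ i, H (b i) = ((μ i : ℝ) : ℂ) • b i)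
    (r : ℝ) (v : E) (hv : ‖v‖ = 1) :
    Real.exp (r * (⟪v, H v⟫_ℂ).re) ≤ (⟪v, NormedSpace.exp ((r : ℂ) • H) v⟫_ℂ).re := by
  set w : Fin n → ℝ := fun i => ‖⟪b i, v⟫_ℂ‖ ^ 2 with hw
  have hw0 : ∀ i ∈ Finset.univ, (0 : ℝ) ≤ w i := fun i _ => by positivity
  have hw1 : ∑ i, w i = 1 := parseval_one_aux b v hv
  have hexp : ∀ i, (NormedSpace.exp ((r : ℂ) • H)) (b i)
      = ((Real.exp (r * μ i) : ℝ) : ℂ) • b i := by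
    intro i
    have h1 : ((r : ℂ) • H) (b i) = ((r * μ i : ℝ) : ℂ) • b i := by
      rw [ContinuousLinearMap.smul_apply, hb i, smul_smul]; push_cast; ring_nf
    rw [exp_apply_eigen_aux _ _ _ h1, ← Complex.ofReal_exp]
  rw [re_inner_diag b H μ hb v, re_inner_diag b _ _ hexp v]
  have jensen := convexOn_exp.map_sum_le (t := Finset.univ) (p := fun i => r * μ i)
    hw0 hw1 (fun i _ => Set.mem_univ _)
  calc Real.exp (r * ∑ i, μ i * w i) = Real.exp (∑ i, w i • (r * μ i)) := by
        rw [Finset.mul_sum]; congr 1; exact Finset.sum_congr rfl fun i _ => by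
          simp [smul_eq_mul]; ring
    _ ≤ ∑ i, w i • Real.exp (r * μ i) := jensen
    _ = ∑ i, Real.exp (r * μ i) * w i := Finset.sum_congr rfl fun i _ => by
          simp [smul_eq_mul, mul_comm]

end Aux

section Euclid

variable {N : ℕ}

local notation "𝓔" => EuclideanSpace ℂ (Fin N)

lemma partitionFun_eq_sum (β : ℝ) (H : 𝓔 →L[ℂ] 𝓔)
    (b : OrthonormalBasis (Fin N) ℂ 𝓔) (μ : Fin N → ℝ)
    (hb : ∀ i, H (b i) = ((μ i : ℝ) : ℂ) • b i) :
    partitionFun β H = ∑ i, Real.exp (-β * μ i) := by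
  rw [partitionFun, trace_eq_sum_inner_aux b]
  have key : ∀ i, ⟪b i, (NormedSpace.exp (((-β : ℝ) : ℂ) • H)) (b i)⟫_ℂ
      = ((Real.exp (-β * μ i) : ℝ) : ℂ) := by
    intro i
    have h1 : (((-β : ℝ) : ℂ) • H) (b i) = ((-β * μ i : ℝ) : ℂ) • b i := by
      rw [ContinuousLinearMap.smul_apply, hb i, smul_smul]
      push_cast
      ring_nf
    rw [exp_apply_eigen_aux _ _ _ h1, inner_smul_right, ← Complex.ofReal_exp]
    have : ⟪b i, b i⟫_ℂ = 1 := by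
      have := b.orthonormal.1 i
      rw [@inner_self_eq_norm_sq_to_K, this]; norm_num
    rw [this, mul_one]
  calc (∑ i, ⟪b i, (NormedSpace.exp (((-β : ℝ) : ℂ) • H)).toLinearMap (b i)⟫_ℂ).re
      = (((∑ i, Real.exp (-β * μ i) : ℝ)) : ℂ).re := by
        simp only [ContinuousLinearMap.coe_coe, key, ← Complex.ofReal_sum]
    _ = ∑ i, Real.exp (-β * μ i) := Complex.ofReal_re _

/-- The key one-sided bound: `Z_β(A) ≥ e^{-β‖W‖} Z_β(A+W)`. -/
lemma partitionFun_key (β : ℝ) (hβ : 0 ≤ β) (A W : 𝓔 →L[ℂ] 𝓔)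
    (hA : IsSelfAdjoint A) (hW : IsSelfAdjoint W) :
    Real.exp (-(β * ‖W‖)) * partitionFun β (A + W) ≤ partitionFun β A := by
  have hAW : IsSelfAdjoint (A + W) := IsSelfAdjoint.add (R := 𝓔 →L[ℂ] 𝓔) hA hW
  have hsym : (↑(A + W) : 𝓔 →ₗ[ℂ] 𝓔).IsSymmetric := hAW.isSymmetric
  have hfin : Module.finrank ℂ 𝓔 = N := finrank_euclideanSpace_fin
  set b := hsym.eigenvectorBasis hfin with hbdef
  set μ := hsym.eigenvalues hfin with hμdef
  have hb : ∀ i, (A + W) (b i) = ((μ i : ℝ) : ℂ) • b i := fun i =>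
    hsym.apply_eigenvectorBasis hfin i
  have hZ1 : partitionFun β (A + W) = ∑ i, Real.exp (-β * μ i) :=
    partitionFun_eq_sum β (A + W) b μ hb
  -- lower bound each diagonal entry of `exp (-β A)` in the basis `b`
  have hAsym : (↑A : 𝓔 →ₗ[ℂ] 𝓔).IsSymmetric := hA.isSymmetric
  set bA := hAsym.eigenvectorBasis hfin
  set μA := hAsym.eigenvalues hfin
  have hbA : ∀ i, A (bA i) = ((μA i : ℝ) : ℂ) • bA i := fun i =>
    hAsym.apply_eigenvectorBasis hfin i
  have hunit : ∀ i, ‖b i‖ = 1 := fun i => b.orthonormal.1 i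
  have hmain : ∀ i, Real.exp (-(β * ‖W‖)) * Real.exp (-β * μ i)
      ≤ (⟪b i, (NormedSpace.exp (((-β : ℝ) : ℂ) • A)) (b i)⟫_ℂ).re := by
    intro i
    have hp := peierls_aux bA A μA hbA (-β) (b i) (hunit i)
    refine le_trans ?_ (by exact_mod_cast hp)
    rw [← Real.exp_add]
    apply Real.exp_le_exp.2
    -- ⟪b i, A b i⟫ = μ i - ⟪b i, W b i⟫
    have hsplit : (⟪b i, A (b i)⟫_ℂ).re = μ i - (⟪b i, W (b i)⟫_ℂ).re := by
      have h1 : A (b i) = (A + W) (b i) - W (b i) := by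
        simp [ContinuousLinearMap.add_apply]
      rw [h1, inner_sub_right, hb i, inner_smul_right]
      have : ⟪b i, b i⟫_ℂ = 1 := by
        rw [@inner_self_eq_norm_sq_to_K, hunit i]; norm_num
      rw [this, mul_one, Complex.sub_re, Complex.ofReal_re]
    rw [hsplit]
    have hWb : |(⟪b i, W (b i)⟫_ℂ).re| ≤ ‖W‖ := by
      have h1 : |(⟪b i, W (b i)⟫_ℂ).re| ≤ ‖⟪b i, W (b i)⟫_ℂ‖ := Complex.abs_re_le_norm _
      have h2 : ‖⟪b i, W (b i)⟫_ℂ‖ ≤ ‖b i‖ * ‖W (b i)‖ := norm_inner_le_norm _ _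
      have h3 : ‖W (b i)‖ ≤ ‖W‖ * ‖b i‖ := W.le_opNorm _
      calc |(⟪b i, W (b i)⟫_ℂ).re| ≤ ‖b i‖ * ‖W (b i)‖ := h1.trans h2
        _ ≤ ‖b i‖ * (‖W‖ * ‖b i‖) := by
            exact mul_le_mul_of_nonneg_left h3 (norm_nonneg _)
        _ = ‖W‖ := by rw [hunit i]; ring
    have := (abs_le.1 hWb).1
    nlinarith
  -- sum up
  have hZ0 : partitionFun β A = ∑ i, (⟪b i,
      (NormedSpace.exp (((-β : ℝ) : ℂ) • A)) (b i)⟫_ℂ).re := by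
    rw [partitionFun, trace_eq_sum_inner_aux b, Complex.re_sum]
    rfl
  rw [hZ0, hZ1, Finset.mul_sum]
  exact Finset.sum_le_sum fun i _ => hmain i

lemma partitionFun_pos (hN : 0 < N) (β : ℝ) (H : 𝓔 →L[ℂ] 𝓔) (hH : IsSelfAdjoint H) :
    0 < partitionFun β H := by
  have hsym : (↑H : 𝓔 →ₗ[ℂ] 𝓔).IsSymmetric := hH.isSymmetric
  have hfin : Module.finrank ℂ 𝓔 = N := finrank_euclideanSpace_fin
  rw [partitionFun_eq_sum β H (hsym.eigenvectorBasis hfin) (hsym.eigenvalues hfin)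
    (fun i => hsym.apply_eigenvectorBasis hfin i)]
  have : Nonempty (Fin N) := ⟨⟨0, hN⟩⟩
  exact Finset.sum_pos (fun i _ => Real.exp_pos _) Finset.univ_nonempty

end Euclid

/-- **Free-energy difference bound.**  For Hermitian `H₀` and `H₁ = H₀ + V` and `β ≥ 0`,
`e^{-β‖V‖} ≤ Z₁/Z₀ ≤ e^{β‖V‖}`, and for `β > 0` the free-energy difference
`ΔA = -(1/β) log (Z₁/Z₀)` satisfies `|ΔA| ≤ ‖V‖`. -/
theorem free_energy_difference_le_norm {N : ℕ} (hN : 0 < N)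
    (H₀ V : EuclideanSpace ℂ (Fin N) →L[ℂ] EuclideanSpace ℂ (Fin N))
    (hH₀ : IsSelfAdjoint H₀) (hV : IsSelfAdjoint V)
    (β : ℝ) (hβ : 0 ≤ β) :
    (Real.exp (-(β * ‖V‖)) ≤ partitionFun β (H₀ + V) / partitionFun β H₀ ∧
      partitionFun β (H₀ + V) / partitionFun β H₀ ≤ Real.exp (β * ‖V‖)) ∧
    (0 < β →
      |-(1 / β) * Real.log (partitionFun β (H₀ + V) / partitionFun β H₀)| ≤ ‖V‖) := by
  have hZ0 : 0 < partitionFun β H₀ := partitionFun_pos hN β H₀ hH₀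
  have hZ1 : 0 < partitionFun β (H₀ + V) := partitionFun_pos hN β (H₀ + V)
    (IsSelfAdjoint.add (R := EuclideanSpace ℂ (Fin N) →L[ℂ] EuclideanSpace ℂ (Fin N)) hH₀ hV)
  have h1 : Real.exp (-(β * ‖V‖)) * partitionFun β (H₀ + V) ≤ partitionFun β H₀ :=
    partitionFun_key β hβ H₀ V hH₀ hV
  have h2 : Real.exp (-(β * ‖V‖)) * partitionFun β H₀ ≤ partitionFun β (H₀ + V) := by
    have hVneg : IsSelfAdjoint (-V) := by
      have h := star_neg (R := EuclideanSpace ℂ (Fin N) →L[ℂ] EuclideanSpace ℂ (Fin N)) V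
      rw [IsSelfAdjoint, h, hV.star_eq]
    have h := partitionFun_key β hβ (H₀ + V) (-V)
      (IsSelfAdjoint.add (R := EuclideanSpace ℂ (Fin N) →L[ℂ] EuclideanSpace ℂ (Fin N)) hH₀ hV) hVneg
    rw [norm_neg, add_neg_cancel_right] at h
    exact h
  have hlow : Real.exp (-(β * ‖V‖)) ≤ partitionFun β (H₀ + V) / partitionFun β H₀ :=
    (le_div_iff₀ hZ0).2 h2
  have hup : partitionFun β (H₀ + V) / partitionFun β H₀ ≤ Real.exp (β * ‖V‖) := by
    rw [div_le_iff₀ hZ0]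
    calc partitionFun β (H₀ + V)
        = Real.exp (β * ‖V‖) * (Real.exp (-(β * ‖V‖)) * partitionFun β (H₀ + V)) := by
          rw [← mul_assoc, ← Real.exp_add, add_neg_cancel, Real.exp_zero, one_mul]
      _ ≤ Real.exp (β * ‖V‖) * partitionFun β H₀ :=
          mul_le_mul_of_nonneg_left h1 (Real.exp_pos _).le
  refine ⟨⟨hlow, hup⟩, fun hβpos => ?_⟩
  set r := partitionFun β (H₀ + V) / partitionFun β H₀ with hr
  have hrpos : 0 < r := div_pos hZ1 hZ0
  have hlog : |Real.log r| ≤ β * ‖V‖ := by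
    rw [abs_le]
    constructor
    · calc -(β * ‖V‖) = Real.log (Real.exp (-(β * ‖V‖))) := (Real.log_exp _).symm
        _ ≤ Real.log r := Real.log_le_log (Real.exp_pos _) hlow
    · calc Real.log r ≤ Real.log (Real.exp (β * ‖V‖)) := Real.log_le_log hrpos hup
        _ = β * ‖V‖ := Real.log_exp _
  have : |-(1 / β) * Real.log r| = (1 / β) * |Real.log r| := by
    rw [abs_mul, abs_neg, abs_of_pos (by positivity : (0:ℝ) < 1 / β)]
  rw [this]
  calc (1 / β) * |Real.log r| ≤ (1 / β) * (β * ‖V‖) :=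
        mul_le_mul_of_nonneg_left hlog (by positivity)
    _ = ‖V‖ := by field_simp
end

section
/- Jarzynski equality (two-time measurement, finite dimension): Let H₀ and H₁ be Hermitian matrices on ℂ^N with orthonormal eigenbases {φ₀ₘ}, {φ₁ₙ} and eigenvalues ε₀ₘ, ε₁ₙ, let 𝒰 be a unitary, and β ≥ 0. Then ∑ₘ∑ₙ (e^{-β ε₀ₘ}/Z₀) · |⟨φ₁ₙ|𝒰|φ₀ₘ⟩|² · e^{-β(ε₁ₙ - ε₀ₘ)} = Z₁/Z₀, where Zᵢ = tr(exp(-β Hᵢ)). -/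
open scoped BigOperators

/-- **Jarzynski equality** (two-time measurement scheme, finite dimension).
Given Hermitian `H₀, H₁` on `ℂ^N` with orthonormal eigenbases `φ₀, φ₁` and eigenvalues
`e0, e1`, a unitary `𝒰`, and `β ≥ 0`:
`∑ₘ ∑ₙ (e^{-β e0ₘ}/Z₀) |⟨φ₁ₙ|𝒰|φ₀ₘ⟩|² e^{-β (e1ₙ - e0ₘ)} = Z₁/Z₀`. -/
theorem jarzynski_equality {N : ℕ}
    (H₀ H₁ : EuclideanSpace ℂ (Fin N) →L[ℂ] EuclideanSpace ℂ (Fin N))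
    (hH₀ : IsSelfAdjoint H₀) (hH₁ : IsSelfAdjoint H₁)
    (φ₀ φ₁ : OrthonormalBasis (Fin N) ℂ (EuclideanSpace ℂ (Fin N)))
    (e0 e1 : Fin N → ℝ)
    (h0 : ∀ m, H₀ (φ₀ m) = (e0 m : ℂ) • φ₀ m)
    (h1 : ∀ n, H₁ (φ₁ n) = (e1 n : ℂ) • φ₁ n)
    (𝒰 : EuclideanSpace ℂ (Fin N) ≃ₗᵢ[ℂ] EuclideanSpace ℂ (Fin N))
    (β : ℝ) (hβ : 0 ≤ β)
    (Z₀ Z₁ : ℝ)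
    (hZ₀ : Z₀ = ∑ m, Real.exp (-β * e0 m))
    (hZ₁ : Z₁ = ∑ n, Real.exp (-β * e1 n)) :
    ∑ m, ∑ n,
        Real.exp (-β * e0 m) / Z₀ * ‖(inner ℂ (φ₁ n) (𝒰 (φ₀ m)) : ℂ)‖ ^ 2 *
          Real.exp (-β * (e1 n - e0 m))
      = Z₁ / Z₀ := by
  have key : ∀ n, ∑ m, ‖(inner ℂ (φ₁ n) (𝒰 (φ₀ m)) : ℂ)‖ ^ 2 = 1 := by
    intro n
    set x := 𝒰.symm (φ₁ n) with hx
    have hinner : ∀ m, (inner ℂ (φ₁ n) (𝒰 (φ₀ m)) : ℂ) = inner ℂ x (φ₀ m) := by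
      intro m
      rw [hx, ← 𝒰.inner_map_map x (φ₀ m), 𝒰.apply_symm_apply]
    have hsum : ∑ m, ‖(inner ℂ (φ₁ n) (𝒰 (φ₀ m)) : ℂ)‖ ^ 2
        = ∑ m, ‖φ₀.repr x m‖ ^ 2 := by
      refine Finset.sum_congr rfl fun m _ => ?_
      rw [hinner, φ₀.repr_apply_apply, ← inner_conj_symm, RCLike.norm_conj]
    rw [hsum]
    have hx1 : ‖x‖ = 1 := by
      rw [hx, 𝒰.symm.norm_map]
      exact φ₁.orthonormal.1 n
    have := φ₀.repr.norm_map x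
    rw [EuclideanSpace.norm_eq] at this
    have h2 : (∑ m, ‖φ₀.repr x m‖ ^ 2) = ‖x‖ ^ 2 := by
      rw [← this, Real.sq_sqrt (Finset.sum_nonneg fun i _ => sq_nonneg _)]
    rw [h2, hx1, one_pow]
  have step : ∀ m n,
      Real.exp (-β * e0 m) / Z₀ * ‖(inner ℂ (φ₁ n) (𝒰 (φ₀ m)) : ℂ)‖ ^ 2 *
        Real.exp (-β * (e1 n - e0 m))
      = Real.exp (-β * e1 n) / Z₀ * ‖(inner ℂ (φ₁ n) (𝒰 (φ₀ m)) : ℂ)‖ ^ 2 := by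
    intro m n
    rw [div_mul_eq_mul_div, div_mul_eq_mul_div, div_mul_eq_mul_div]
    congr 1
    rw [mul_right_comm, ← Real.exp_add]
    ring_nf
  calc ∑ m, ∑ n,
        Real.exp (-β * e0 m) / Z₀ * ‖(inner ℂ (φ₁ n) (𝒰 (φ₀ m)) : ℂ)‖ ^ 2 *
          Real.exp (-β * (e1 n - e0 m))
      = ∑ n, ∑ m, Real.exp (-β * e1 n) / Z₀ * ‖(inner ℂ (φ₁ n) (𝒰 (φ₀ m)) : ℂ)‖ ^ 2 := by
        rw [Finset.sum_comm]
        exact Finset.sum_congr rfl fun n _ => Finset.sum_congr rfl fun m _ => step m n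
    _ = ∑ n, Real.exp (-β * e1 n) / Z₀ := by
        refine Finset.sum_congr rfl fun n _ => ?_
        rw [← Finset.mul_sum, key n, mul_one]
    _ = Z₁ / Z₀ := by rw [hZ₁, Finset.sum_div]
end

section
/- Purification norm identity (Jarzynski in disguise): Let |Ψ₀⟩ = (1/√Z₀) ∑ₘ e^{-β ε₀ₘ/2} |φ₀ₘ⟩ ⊗ |φ₀ₘ*⟩ be the thermofield double state of H₀, let W = H₁ ⊗ 1 − 1 ⊗ H₀*, and 𝒰 a unitary on the first factor. Then ‖ e^{-βW/2} (𝒰 ⊗ 1) |Ψ₀⟩ ‖ = √(Z₁/Z₀) = e^{-β ΔA/2}. -/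
open scoped BigOperators InnerProductSpace

/-- The elementary tensor `u ⊗ v`, realized on the doubled Euclidean space. -/
noncomputable def tensorVec {N : ℕ} (u v : EuclideanSpace ℂ (Fin N)) :
    EuclideanSpace ℂ (Fin N × Fin N) :=
  (WithLp.equiv 2 _).symm fun p => u p.1 * v p.2

/-- Entrywise complex conjugation of a vector (in the computational basis). -/
noncomputable def starVec {N : ℕ} (u : EuclideanSpace ℂ (Fin N)) :
    EuclideanSpace ℂ (Fin N) :=
  (WithLp.equiv 2 _).symm fun i => star (u i)

lemma tensorVec_apply {N : ℕ} (u v : EuclideanSpace ℂ (Fin N)) (p : Fin N × Fin N) :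
    tensorVec u v p = u p.1 * v p.2 := rfl

lemma starVec_apply {N : ℕ} (u : EuclideanSpace ℂ (Fin N)) (i : Fin N) :
    starVec u i = star (u i) := rfl

lemma inner_tensorVec {N : ℕ} (u v u' v' : EuclideanSpace ℂ (Fin N)) :
    ⟪tensorVec u v, tensorVec u' v'⟫_ℂ = ⟪u, u'⟫_ℂ * ⟪v, v'⟫_ℂ := by
  simp only [PiLp.inner_apply, tensorVec_apply, RCLike.inner_apply]
  rw [Fintype.sum_prod_type, Finset.sum_mul_sum]
  apply Finset.sum_congr rfl
  intro i _
  apply Finset.sum_congr rfl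
  intro j _
  simp only [map_mul]
  ring

lemma inner_starVec {N : ℕ} (u v : EuclideanSpace ℂ (Fin N)) :
    ⟪starVec u, starVec v⟫_ℂ = star ⟪u, v⟫_ℂ := by
  simp only [PiLp.inner_apply, starVec_apply, RCLike.inner_apply, star_sum]
  apply Finset.sum_congr rfl
  intro i _
  rw [starRingEnd_apply, starRingEnd_apply, star_star, star_mul', star_star]

lemma tensorVec_add_left {N : ℕ} (u u' v : EuclideanSpace ℂ (Fin N)) :
    tensorVec (u + u') v = tensorVec u v + tensorVec u' v := by
  ext p
  simp [tensorVec_apply, PiLp.add_apply, add_mul]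

lemma tensorVec_smul_left {N : ℕ} (c : ℂ) (u v : EuclideanSpace ℂ (Fin N)) :
    tensorVec (c • u) v = c • tensorVec u v := by
  ext p
  simp [tensorVec_apply, PiLp.smul_apply, mul_assoc]

lemma tensorVec_sum_left {N : ℕ} {ι : Type*} (s : Finset ι) (f : ι → EuclideanSpace ℂ (Fin N))
    (v : EuclideanSpace ℂ (Fin N)) :
    tensorVec (∑ i ∈ s, f i) v = ∑ i ∈ s, tensorVec (f i) v := by
  classical
  induction s using Finset.induction with
  | empty =>
    ext p
    simp [tensorVec_apply]
  | insert _ _ h ih =>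
    rw [Finset.sum_insert h, Finset.sum_insert h, tensorVec_add_left, ih]

lemma exp_apply_eigenvector {E : Type*} [NormedAddCommGroup E] [NormedSpace ℂ E]
    [CompleteSpace E] (A : E →L[ℂ] E) (v : E) (μ : ℂ) (h : A v = μ • v) :
    NormedSpace.exp A v = Complex.exp μ • v := by
  have hpow : ∀ n : ℕ, (A ^ n) v = μ ^ n • v := by
    intro n
    induction n with
    | zero => simp
    | succ n ih =>
      rw [pow_succ, ContinuousLinearMap.mul_apply, h, map_smul, ih, smul_smul, ← pow_succ']
  have hs : Summable fun n : ℕ => ((n.factorial : ℂ))⁻¹ • A ^ n := NormedSpace.expSeries_summable' A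
  have hs2 : Summable fun n : ℕ => ((n.factorial : ℂ))⁻¹ * μ ^ n := by
    simpa [smul_eq_mul] using NormedSpace.expSeries_summable' (𝕂 := ℂ) μ
  calc NormedSpace.exp A v = (∑' n : ℕ, ((n.factorial : ℂ))⁻¹ • A ^ n) v := by
        rw [NormedSpace.exp_eq_tsum ℂ]
    _ = ∑' n : ℕ, (((n.factorial : ℂ))⁻¹ • A ^ n) v :=
        (ContinuousLinearMap.apply ℂ E v).map_tsum hs
    _ = ∑' n : ℕ, (((n.factorial : ℂ))⁻¹ * μ ^ n) • v := by
        simp only [ContinuousLinearMap.smul_apply, hpow, smul_smul]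
    _ = (∑' n : ℕ, ((n.factorial : ℂ))⁻¹ * μ ^ n) • v := hs2.tsum_smul_const v
    _ = Complex.exp μ • v := by
        rw [Complex.exp_eq_exp_ℂ, NormedSpace.exp_eq_tsum ℂ]
        simp [smul_eq_mul]


/-- **Purification norm identity (Jarzynski in disguise).**
Let `|Ψ₀⟩ = Z₀^{-1/2} ∑ₘ e^{-β e0ₘ/2} |φ₀ₘ⟩⊗|φ₀ₘ*⟩` be the thermofield double of `H₀`,
`W = H₁ ⊗ 1 − 1 ⊗ H₀*` (characterized by its eigenbasis `|φ₁ₙ⟩⊗|φ₀ₘ*⟩` with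
eigenvalues `e1ₙ − e0ₘ`), `UI = 𝒰 ⊗ 1`.  Then
`‖e^{-βW/2} (𝒰⊗1)|Ψ₀⟩‖ = √(Z₁/Z₀) = e^{-β ΔA/2}`. -/
theorem purification_norm_identity {N : ℕ} (hN : 0 < N)
    (H₀ H₁ : EuclideanSpace ℂ (Fin N) →L[ℂ] EuclideanSpace ℂ (Fin N))
    (hH₀ : IsSelfAdjoint H₀) (hH₁ : IsSelfAdjoint H₁)
    (φ₀ φ₁ : OrthonormalBasis (Fin N) ℂ (EuclideanSpace ℂ (Fin N)))
    (e0 e1 : Fin N → ℝ)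
    (h0 : ∀ m, H₀ (φ₀ m) = (e0 m : ℂ) • φ₀ m)
    (h1 : ∀ n, H₁ (φ₁ n) = (e1 n : ℂ) • φ₁ n)
    (𝒰 : EuclideanSpace ℂ (Fin N) ≃ₗᵢ[ℂ] EuclideanSpace ℂ (Fin N))
    (β : ℝ) (hβ : 0 ≤ β)
    (Z₀ Z₁ : ℝ)
    (hZ₀ : Z₀ = ∑ m, Real.exp (-β * e0 m))
    (hZ₁ : Z₁ = ∑ n, Real.exp (-β * e1 n))
    (W UI : EuclideanSpace ℂ (Fin N × Fin N) →L[ℂ] EuclideanSpace ℂ (Fin N × Fin N))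
    (hW : ∀ m n, W (tensorVec (φ₁ n) (starVec (φ₀ m)))
        = ((e1 n - e0 m : ℝ) : ℂ) • tensorVec (φ₁ n) (starVec (φ₀ m)))
    (hUI : ∀ u v, UI (tensorVec u v) = tensorVec (𝒰 u) v)
    (Ψ₀ : EuclideanSpace ℂ (Fin N × Fin N))
    (hΨ₀ : Ψ₀ = ((Real.sqrt Z₀ : ℝ) : ℂ)⁻¹ •
        ∑ m, ((Real.exp (-β * e0 m / 2) : ℝ) : ℂ) • tensorVec (φ₀ m) (starVec (φ₀ m))) :
    ‖(NormedSpace.exp (((-(β / 2) : ℝ) : ℂ) • W)) (UI Ψ₀)‖ = Real.sqrt (Z₁ / Z₀) ∧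
    (0 < β →
      Real.sqrt (Z₁ / Z₀) =
        Real.exp (-β * (-(1 / β) * Real.log (Z₁ / Z₀)) / 2)) := by
  classical
  have hNe : Nonempty (Fin N) := Fin.pos_iff_nonempty.mp hN
  have hZ₀pos : 0 < Z₀ := by
    rw [hZ₀]; exact Finset.sum_pos (fun i _ => Real.exp_pos _) Finset.univ_nonempty
  have hZ₁pos : 0 < Z₁ := by
    rw [hZ₁]; exact Finset.sum_pos (fun i _ => Real.exp_pos _) Finset.univ_nonempty
  set b : Fin N × Fin N → EuclideanSpace ℂ (Fin N × Fin N) :=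
    fun p => tensorVec (φ₁ p.1) (starVec (φ₀ p.2)) with hbdef
  have hb : Orthonormal ℂ b := by
    rw [orthonormal_iff_ite]
    intro p q
    rw [hbdef]
    simp only
    rw [inner_tensorVec, inner_starVec]
    rw [orthonormal_iff_ite.mp φ₁.orthonormal, orthonormal_iff_ite.mp φ₀.orthonormal]
    by_cases hp1 : p.1 = q.1 <;> by_cases hp2 : p.2 = q.2 <;>
      simp [hp1, hp2, Prod.ext_iff]
  -- eigenvector action of the exponential
  have hexp : ∀ p : Fin N × Fin N,
      NormedSpace.exp (((-(β / 2) : ℝ) : ℂ) • W) (b p)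
        = ((Real.exp (-(β / 2) * (e1 p.1 - e0 p.2)) : ℝ) : ℂ) • b p := by
    intro p
    have heig : (((-(β / 2) : ℝ) : ℂ) • W) (b p)
        = ((-(β / 2) * (e1 p.1 - e0 p.2) : ℝ) : ℂ) • b p := by
      rw [ContinuousLinearMap.smul_apply, hW p.2 p.1, smul_smul]
      push_cast
      ring_nf
      rfl
    rw [exp_apply_eigenvector _ _ _ heig, ← Complex.ofReal_exp]
  -- expansion of UI Ψ₀ in the basis b
  have hUIΨ : UI Ψ₀ = ∑ p : Fin N × Fin N,
      (((Real.sqrt Z₀ : ℝ) : ℂ)⁻¹ * (((Real.exp (-β * e0 p.2 / 2) : ℝ) : ℂ)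
        * ⟪φ₁ p.1, 𝒰 (φ₀ p.2)⟫_ℂ)) • b p := by
    rw [hΨ₀, map_smul, map_sum, Finset.smul_sum, Fintype.sum_prod_type_right]
    apply Finset.sum_congr rfl
    intro m _
    rw [map_smul, hUI]
    rw [show (𝒰 (φ₀ m)) = ∑ n, ⟪φ₁ n, 𝒰 (φ₀ m)⟫_ℂ • φ₁ n from (φ₁.sum_repr' _).symm]
    rw [tensorVec_sum_left, Finset.smul_sum, Finset.smul_sum]
    apply Finset.sum_congr rfl
    intro n _
    rw [tensorVec_smul_left, smul_smul, smul_smul, mul_assoc]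
  set L : Fin N × Fin N → ℂ := fun p =>
    ((Real.sqrt Z₀ : ℝ) : ℂ)⁻¹ * (((Real.exp (-β * e0 p.2 / 2) : ℝ) : ℂ)
        * ⟪φ₁ p.1, 𝒰 (φ₀ p.2)⟫_ℂ) * ((Real.exp (-(β / 2) * (e1 p.1 - e0 p.2)) : ℝ) : ℂ)
    with hLdef
  have hX : (NormedSpace.exp (((-(β / 2) : ℝ) : ℂ) • W)) (UI Ψ₀) = ∑ p, L p • b p := by
    rw [hUIΨ, map_sum]
    apply Finset.sum_congr rfl
    intro p _
    rw [map_smul, hexp p, smul_smul]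
  -- Parseval
  have hPar : ∀ n, ∑ m, ‖⟪φ₁ n, 𝒰 (φ₀ m)⟫_ℂ‖ ^ 2 = 1 := by
    intro n
    set v := 𝒰.symm (φ₁ n) with hv
    have h1 : ∀ m, ⟪φ₁ n, 𝒰 (φ₀ m)⟫_ℂ = ⟪v, φ₀ m⟫_ℂ := by
      intro m
      conv_lhs => rw [← 𝒰.apply_symm_apply (φ₁ n)]
      exact 𝒰.inner_map_map v (φ₀ m)
    have h2 : ∑ m, ((‖⟪v, φ₀ m⟫_ℂ‖ : ℂ) ^ 2) = ⟪v, v⟫_ℂ := by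
      rw [← φ₀.sum_inner_mul_inner v v]
      apply Finset.sum_congr rfl
      intro m _
      rw [← inner_conj_symm v (φ₀ m), RCLike.conj_mul]
      rw [RCLike.norm_conj]
      norm_num
    have h3 : ⟪v, v⟫_ℂ = 1 := by
      rw [inner_self_eq_norm_sq_to_K]
      have hvn : ‖v‖ = 1 := by
        rw [hv, LinearIsometryEquiv.norm_map]
        exact φ₁.orthonormal.1 n
      rw [hvn]
      norm_num
    have h4 := h2.trans h3
    have h5 : ((∑ m, ‖⟪v, φ₀ m⟫_ℂ‖ ^ 2 : ℝ) : ℂ) = ((1 : ℝ) : ℂ) := by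
      push_cast
      rw [h4]
    simp_rw [h1]
    exact_mod_cast h5
  -- the squared norm
  have hnormsq : ‖∑ p, L p • b p‖ ^ 2 = Z₁ / Z₀ := by
    have hA : ‖∑ p, L p • b p‖ ^ 2 = ∑ p, ‖L p‖ ^ 2 := by
      rw [InnerProductSpace.norm_sq_eq_re_inner (𝕜 := ℂ), hb.inner_sum L L, map_sum]
      apply Finset.sum_congr rfl
      intro p _
      rw [RCLike.conj_mul]
      simp [← Complex.ofReal_pow]
    rw [hA]
    have hLn : ∀ p : Fin N × Fin N, ‖L p‖ ^ 2
        = Z₀⁻¹ * (Real.exp (-β * e1 p.1) * ‖⟪φ₁ p.1, 𝒰 (φ₀ p.2)⟫_ℂ‖ ^ 2) := by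
      intro p
      rw [hLdef]
      simp only [norm_mul, norm_inv, Complex.norm_real, Real.norm_eq_abs,
        abs_of_nonneg (Real.sqrt_nonneg Z₀), abs_of_nonneg (Real.exp_pos _).le]
      have e1' : Real.exp (-β * e0 p.2 / 2) ^ 2 = Real.exp (-β * e0 p.2) := by
        rw [sq, ← Real.exp_add]; congr 1; ring
      have e2' : Real.exp (-(β / 2) * (e1 p.1 - e0 p.2)) ^ 2
          = Real.exp (-β * (e1 p.1 - e0 p.2)) := by
        rw [sq, ← Real.exp_add]; congr 1; ring
      have e3 : Real.exp (-β * e0 p.2) * Real.exp (-β * (e1 p.1 - e0 p.2))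
          = Real.exp (-β * e1 p.1) := by
        rw [← Real.exp_add]; congr 1; ring
      have e4 : (Real.sqrt Z₀)⁻¹ ^ 2 = Z₀⁻¹ := by
        rw [inv_pow, Real.sq_sqrt hZ₀pos.le]
      calc ((Real.sqrt Z₀)⁻¹ * (Real.exp (-β * e0 p.2 / 2) * ‖⟪φ₁ p.1, 𝒰 (φ₀ p.2)⟫_ℂ‖)
            * Real.exp (-(β / 2) * (e1 p.1 - e0 p.2))) ^ 2
          = (Real.sqrt Z₀)⁻¹ ^ 2 * ((Real.exp (-β * e0 p.2 / 2) ^ 2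
            * Real.exp (-(β / 2) * (e1 p.1 - e0 p.2)) ^ 2)
            * ‖⟪φ₁ p.1, 𝒰 (φ₀ p.2)⟫_ℂ‖ ^ 2) := by ring
        _ = Z₀⁻¹ * (Real.exp (-β * e1 p.1) * ‖⟪φ₁ p.1, 𝒰 (φ₀ p.2)⟫_ℂ‖ ^ 2) := by
            rw [e1', e2', e3, e4]
    simp_rw [hLn]
    rw [Fintype.sum_prod_type]
    have : ∀ n, ∑ m, Z₀⁻¹ * (Real.exp (-β * e1 n) * ‖⟪φ₁ n, 𝒰 (φ₀ m)⟫_ℂ‖ ^ 2)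
        = Z₀⁻¹ * Real.exp (-β * e1 n) := by
      intro n
      rw [← Finset.mul_sum, ← Finset.mul_sum, hPar n, mul_one]
    simp_rw [this]
    rw [← Finset.mul_sum, ← hZ₁]
    rw [inv_mul_eq_div]
  constructor
  · rw [hX, ← Real.sqrt_sq (norm_nonneg (∑ p, L p • b p)), hnormsq]
  · intro hβpos
    have hr : 0 < Z₁ / Z₀ := div_pos hZ₁pos hZ₀pos
    rw [Real.sqrt_eq_rpow, Real.rpow_def_of_pos hr]
    congr 1
    field_simp
end

section
/- Second moment of the reverse work distribution is bounded by ‖V‖²: With 𝒰 = 1 and H₁ = H₀ + V, the reverse work distribution satisfies ∑_w P^rev(w) w² = tr(V² ρ₁) ≤ ‖V‖², where ρ₁ = e^{-βH₁}/Z₁. Key identity: ∑ₘ |⟨φ₀ₘ|φ₁ₙ⟩|² (ε₀ₘ − ε₁ₙ)² = ⟨φ₁ₙ| V² |φ₁ₙ⟩ for every n. -/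
open scoped BigOperators

set_option maxHeartbeats 1000000

lemma exp_apply_eigen {E : Type*} [NormedAddCommGroup E] [NormedSpace ℂ E] [CompleteSpace E]
    (A : E →L[ℂ] E) (x : E) (c : ℂ) (h : A x = c • x) :
    NormedSpace.exp A x = Complex.exp c • x := by
  have hpow : ∀ n : ℕ, (A ^ n) x = c ^ n • x := by
    intro n
    induction n with
    | zero => simp
    | succ n ih =>
        rw [pow_succ, ContinuousLinearMap.mul_apply, h, map_smul, ih, smul_smul, pow_succ,
          mul_comm]
  have hsum : Summable fun n : ℕ => ((n.factorial : ℂ))⁻¹ • A ^ n :=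
    NormedSpace.expSeries_summable' A
  rw [NormedSpace.exp_eq_tsum ℂ]
  have := (ContinuousLinearMap.apply ℂ E x).map_tsum hsum
  simp only [ContinuousLinearMap.apply_apply] at this
  rw [this]
  have heval : ∀ n : ℕ, (((n.factorial : ℂ))⁻¹ • A ^ n) x = (((n.factorial : ℂ))⁻¹ * c ^ n) • x := by
    intro n
    rw [ContinuousLinearMap.smul_apply, hpow, smul_smul]
  simp only [heval]
  rw [Summable.tsum_smul_const]
  · congr 1
    rw [Complex.exp_eq_exp_ℂ, NormedSpace.exp_eq_tsum ℂ]
    simp [smul_eq_mul]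
  · simpa only [smul_eq_mul] using NormedSpace.expSeries_summable' (𝕂 := ℂ) c

lemma trace_eq_sum_inner' {ι : Type*} [Fintype ι] [DecidableEq ι]
    {E : Type*} [NormedAddCommGroup E] [InnerProductSpace ℂ E]
    (b : OrthonormalBasis ι ℂ E) (f : E →L[ℂ] E) :
    LinearMap.trace ℂ E f.toLinearMap = ∑ i, (inner ℂ (b i) (f (b i)) : ℂ) := by
  rw [LinearMap.trace_eq_matrix_trace ℂ b.toBasis, Matrix.trace]
  congr 1
  ext i
  rw [Matrix.diag_apply, LinearMap.toMatrix_apply, OrthonormalBasis.coe_toBasis_repr_apply,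
    OrthonormalBasis.repr_apply_apply, OrthonormalBasis.coe_toBasis]
  rfl

/-- **Second moment of the reverse work distribution is bounded by `‖V‖²`.**
With `𝒰 = 1` and `H₁ = H₀ + V`, the reverse work distribution
`P^rev(w) = ∑_{m,n : e0ₘ−e1ₙ=w} |⟨φ₀ₘ|φ₁ₙ⟩|² e^{-β e1ₙ}/Z₁` satisfies
`∑_w P^rev(w) w² = tr(V² ρ₁) ≤ ‖V‖²`, together with the key identity
`∑ₘ |⟨φ₀ₘ|φ₁ₙ⟩|² (e0ₘ − e1ₙ)² = ⟨φ₁ₙ|V²|φ₁ₙ⟩` for every `n`. -/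
theorem reverse_second_moment_le_normV_sq {N : ℕ}
    (H₀ H₁ V : EuclideanSpace ℂ (Fin N) →L[ℂ] EuclideanSpace ℂ (Fin N))
    (hH₀ : IsSelfAdjoint H₀) (hV : IsSelfAdjoint V) (hH₁ : H₁ = H₀ + V)
    (φ₀ φ₁ : OrthonormalBasis (Fin N) ℂ (EuclideanSpace ℂ (Fin N)))
    (e0 e1 : Fin N → ℝ)
    (h0 : ∀ m, H₀ (φ₀ m) = (e0 m : ℂ) • φ₀ m)
    (h1 : ∀ n, H₁ (φ₁ n) = (e1 n : ℂ) • φ₁ n)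
    (β : ℝ) (hβ : 0 ≤ β)
    (Z₁ : ℝ) (hZ₁ : Z₁ = ∑ n, Real.exp (-β * e1 n))
    (ρ₁ : EuclideanSpace ℂ (Fin N) →L[ℂ] EuclideanSpace ℂ (Fin N))
    (hρ₁ : ρ₁ = ((Z₁ : ℂ))⁻¹ • NormedSpace.exp (((-β : ℝ) : ℂ) • H₁))
    (Prev : ℝ → ℝ)
    (hPrev : ∀ ω, Prev ω = ∑ p ∈ Finset.univ.filter
        (fun p : Fin N × Fin N => e0 p.1 - e1 p.2 = ω),
        ‖(inner ℂ (φ₀ p.1) (φ₁ p.2) : ℂ)‖ ^ 2 * Real.exp (-β * e1 p.2) / Z₁) :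
    ((∑ ω ∈ Finset.image (fun p : Fin N × Fin N => e0 p.1 - e1 p.2) Finset.univ,
        Prev ω * ω ^ 2 : ℝ) : ℂ)
      = LinearMap.trace ℂ (EuclideanSpace ℂ (Fin N)) ((V ∘L V ∘L ρ₁).toLinearMap) ∧
    (∑ ω ∈ Finset.image (fun p : Fin N × Fin N => e0 p.1 - e1 p.2) Finset.univ,
        Prev ω * ω ^ 2) ≤ ‖V‖ ^ 2 ∧
    (∀ n, ((∑ m, ‖(inner ℂ (φ₀ m) (φ₁ n) : ℂ)‖ ^ 2 * (e0 m - e1 n) ^ 2 : ℝ) : ℂ)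
        = (inner ℂ (φ₁ n) (V (V (φ₁ n))) : ℂ)) := by
  classical
  -- Key scalar identity
  have hkey : ∀ m n, ((e0 m - e1 n : ℝ) : ℂ) * (inner ℂ (φ₀ m) (φ₁ n) : ℂ)
      = - (inner ℂ (φ₀ m) (V (φ₁ n)) : ℂ) := by
    intro m n
    have hsym := hH₀.isSymmetric (φ₀ m) (φ₁ n)
    have h0' : (inner ℂ (φ₀ m) (H₀ (φ₁ n)) : ℂ) = (e0 m : ℂ) * inner ℂ (φ₀ m) (φ₁ n) := by
      simp only [ContinuousLinearMap.coe_coe] at hsym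
      rw [← hsym, h0, inner_smul_left, Complex.conj_ofReal]
    have h1' : (inner ℂ (φ₀ m) (H₁ (φ₁ n)) : ℂ) = (e1 n : ℂ) * inner ℂ (φ₀ m) (φ₁ n) := by
      rw [h1, inner_smul_right]
    have hVy : V (φ₁ n) = H₁ (φ₁ n) - H₀ (φ₁ n) := by rw [hH₁]; simp
    rw [hVy, inner_sub_right, h0', h1']
    push_cast
    ring
  -- Key norm identity
  have key2 : ∀ m n, ‖(inner ℂ (φ₀ m) (φ₁ n) : ℂ)‖ ^ 2 * (e0 m - e1 n) ^ 2
      = ‖(inner ℂ (φ₀ m) (V (φ₁ n)) : ℂ)‖ ^ 2 := by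
    intro m n
    have h := congrArg norm (hkey m n)
    rw [norm_neg, norm_mul, Complex.norm_real] at h
    rw [← h, mul_pow, Real.norm_eq_abs, sq_abs]
    ring
  -- Parseval
  have pars : ∀ y : EuclideanSpace ℂ (Fin N),
      ∑ m, ‖(inner ℂ (φ₀ m) y : ℂ)‖ ^ 2 = ‖y‖ ^ 2 := by
    intro y
    have h1 : ‖φ₀.repr y‖ = ‖y‖ := φ₀.repr.norm_map y
    have h2 : ‖φ₀.repr y‖ ^ 2 = ∑ m, ‖φ₀.repr y m‖ ^ 2 := by
      rw [EuclideanSpace.norm_eq, Real.sq_sqrt (by positivity)]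
    rw [← h1, h2]
    exact Finset.sum_congr rfl fun m _ => by rw [φ₀.repr_apply_apply]
  have keysum : ∀ n, ∑ m, ‖(inner ℂ (φ₀ m) (φ₁ n) : ℂ)‖ ^ 2 * (e0 m - e1 n) ^ 2
      = ‖V (φ₁ n)‖ ^ 2 := by
    intro n
    calc ∑ m, ‖(inner ℂ (φ₀ m) (φ₁ n) : ℂ)‖ ^ 2 * (e0 m - e1 n) ^ 2
        = ∑ m, ‖(inner ℂ (φ₀ m) (V (φ₁ n)) : ℂ)‖ ^ 2 :=
          Finset.sum_congr rfl fun m _ => key2 m n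
      _ = ‖V (φ₁ n)‖ ^ 2 := pars _
  -- ⟪φ₁ n, V (V (φ₁ n))⟫ = ‖V (φ₁ n)‖²
  have hVV : ∀ n, (inner ℂ (φ₁ n) (V (V (φ₁ n))) : ℂ) = ((‖V (φ₁ n)‖ ^ 2 : ℝ) : ℂ) := by
    intro n
    have hsym := hV.isSymmetric (φ₁ n) (V (φ₁ n))
    simp only [ContinuousLinearMap.coe_coe] at hsym
    rw [← hsym, inner_self_eq_norm_sq_to_K]
    norm_cast
  -- eigenvalue equation for ρ₁
  have hρa : ∀ n, ρ₁ (φ₁ n) = ((Real.exp (-β * e1 n) / Z₁ : ℝ) : ℂ) • φ₁ n := by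
    intro n
    have he : ((((-β : ℝ) : ℂ)) • H₁) (φ₁ n) = ((-β * e1 n : ℝ) : ℂ) • φ₁ n := by
      rw [ContinuousLinearMap.smul_apply, h1, smul_smul]
      push_cast
      ring_nf
    rw [hρ₁, ContinuousLinearMap.smul_apply, exp_apply_eigen _ _ _ he,
      ← Complex.ofReal_exp, smul_smul]
    congr 1
    push_cast
    ring
  -- trace computation
  have htr : LinearMap.trace ℂ (EuclideanSpace ℂ (Fin N)) ((V ∘L V ∘L ρ₁).toLinearMap)
      = ∑ n, ((‖V (φ₁ n)‖ ^ 2 * (Real.exp (-β * e1 n) / Z₁) : ℝ) : ℂ) := by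
    rw [trace_eq_sum_inner' φ₁]
    refine Finset.sum_congr rfl fun n _ => ?_
    simp only [ContinuousLinearMap.comp_apply]
    rw [hρa n, map_smul, map_smul, inner_smul_right, hVV n]
    push_cast
    ring
  -- the main sum
  have hS : (∑ ω ∈ Finset.image (fun p : Fin N × Fin N => e0 p.1 - e1 p.2) Finset.univ,
        Prev ω * ω ^ 2)
      = ∑ n, ‖V (φ₁ n)‖ ^ 2 * (Real.exp (-β * e1 n) / Z₁) := by
    have step1 : (∑ ω ∈ Finset.image (fun p : Fin N × Fin N => e0 p.1 - e1 p.2) Finset.univ,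
          Prev ω * ω ^ 2)
        = ∑ ω ∈ Finset.image (fun p : Fin N × Fin N => e0 p.1 - e1 p.2) Finset.univ,
            ∑ p ∈ Finset.univ.filter (fun p : Fin N × Fin N => e0 p.1 - e1 p.2 = ω),
              ‖(inner ℂ (φ₀ p.1) (φ₁ p.2) : ℂ)‖ ^ 2 * Real.exp (-β * e1 p.2) / Z₁
                * (e0 p.1 - e1 p.2) ^ 2 := by
      refine Finset.sum_congr rfl fun ω hω => ?_
      rw [hPrev, Finset.sum_mul]
      refine Finset.sum_congr rfl fun p hp => ?_
      rw [(Finset.mem_filter.mp hp).2]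
    rw [step1, Finset.sum_fiberwise_of_maps_to
      (fun p _ => Finset.mem_image_of_mem _ (Finset.mem_univ p)), Fintype.sum_prod_type,
      Finset.sum_comm]
    refine Finset.sum_congr rfl fun n _ => ?_
    have hterm : ∀ m : Fin N,
        ‖(inner ℂ (φ₀ m) (φ₁ n) : ℂ)‖ ^ 2 * Real.exp (-β * e1 n) / Z₁ * (e0 m - e1 n) ^ 2
        = ‖(inner ℂ (φ₀ m) (φ₁ n) : ℂ)‖ ^ 2 * (e0 m - e1 n) ^ 2
            * (Real.exp (-β * e1 n) / Z₁) := by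
      intro m; ring
    calc ∑ m, ‖(inner ℂ (φ₀ m) (φ₁ n) : ℂ)‖ ^ 2 * Real.exp (-β * e1 n) / Z₁ * (e0 m - e1 n) ^ 2
        = ∑ m, ‖(inner ℂ (φ₀ m) (φ₁ n) : ℂ)‖ ^ 2 * (e0 m - e1 n) ^ 2
            * (Real.exp (-β * e1 n) / Z₁) := Finset.sum_congr rfl fun m _ => hterm m
      _ = (∑ m, ‖(inner ℂ (φ₀ m) (φ₁ n) : ℂ)‖ ^ 2 * (e0 m - e1 n) ^ 2)
            * (Real.exp (-β * e1 n) / Z₁) := (Finset.sum_mul _ _ _).symm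
      _ = ‖V (φ₁ n)‖ ^ 2 * (Real.exp (-β * e1 n) / Z₁) := by rw [keysum n]
  have hZnn : 0 ≤ Z₁ := by
    rw [hZ₁]; positivity
  refine ⟨?_, ?_, ?_⟩
  · rw [htr, hS]
    push_cast
    rfl
  · rw [hS]
    have hbd : ∀ n : Fin N, ‖V (φ₁ n)‖ ^ 2 ≤ ‖V‖ ^ 2 := by
      intro n
      have h1 : ‖V (φ₁ n)‖ ≤ ‖V‖ := by
        have := V.le_opNorm (φ₁ n)
        rwa [φ₁.orthonormal.1 n, mul_one] at this
      exact pow_le_pow_left₀ (norm_nonneg _) h1 2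
    have hdiv : Z₁ / Z₁ ≤ 1 := by
      rcases eq_or_ne Z₁ 0 with h | h
      · simp [h]
      · rw [div_self h]
    calc ∑ n, ‖V (φ₁ n)‖ ^ 2 * (Real.exp (-β * e1 n) / Z₁)
        ≤ ∑ n, ‖V‖ ^ 2 * (Real.exp (-β * e1 n) / Z₁) :=
          Finset.sum_le_sum fun n _ => mul_le_mul_of_nonneg_right (hbd n)
            (div_nonneg (Real.exp_pos _).le hZnn)
      _ = ‖V‖ ^ 2 * (Z₁ / Z₁) := by
          rw [← Finset.mul_sum, ← Finset.sum_div, ← hZ₁]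
      _ ≤ ‖V‖ ^ 2 * 1 := mul_le_mul_of_nonneg_left hdiv (by positivity)
      _ = ‖V‖ ^ 2 := mul_one _
  · intro n
    rw [hVV n]
    exact_mod_cast congrArg (Complex.ofReal) (keysum n)
end

section
/- Work cutoff for general Hamiltonians: Let H₀, H₁ = H₀ + V be Hermitian on ℂ^N, 𝒰 unitary, ε > 0, β ≥ 0, and set V_𝒰 = H₁ − 𝒰 H₀ 𝒰†. Then for any wₗ ≤ −6‖V_𝒰‖/ε, the forward work distribution satisfies ∑_{w < wₗ} P(w) e^{-β(w − ΔA)} ≤ (ε/6)², where ΔA = -(1/β) ln(Z₁/Z₀) (equivalently ∑_{w<wₗ} P(w) e^{-βw} ≤ (ε/6)² Z₁/Z₀). -/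
open scoped BigOperators

private lemma div_le_div_of_nonneg_denom {a b c : ℝ} (h : a ≤ b) (hc : 0 ≤ c) :
    a / c ≤ b / c := by
  rcases eq_or_lt_of_le hc with h0 | h0
  · simp [← h0]
  · gcongr

set_option maxHeartbeats 800000 in
/-- **Work cutoff for general Hamiltonians** (Theorem 2 of the paper).
Let `H₁ = H₀ + V` be Hermitian, `𝒰` unitary, `ε > 0`, `β ≥ 0`, and
`V_𝒰 = H₁ − 𝒰 H₀ 𝒰†`.  Then for any `wl ≤ −6‖V_𝒰‖/ε`, the forward work distribution
satisfies `∑_{w < wl} P(w) e^{-βw} ≤ (ε/6)² Z₁/Z₀` (equivalently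
`∑_{w < wl} P(w) e^{-β(w − ΔA)} ≤ (ε/6)²`). -/
theorem work_cutoff_general_hamiltonians {N : ℕ}
    (H₀ H₁ V : EuclideanSpace ℂ (Fin N) →L[ℂ] EuclideanSpace ℂ (Fin N))
    (hH₀ : IsSelfAdjoint H₀) (hV : IsSelfAdjoint V) (hH₁ : H₁ = H₀ + V)
    (φ₀ φ₁ : OrthonormalBasis (Fin N) ℂ (EuclideanSpace ℂ (Fin N)))
    (e0 e1 : Fin N → ℝ)
    (h0 : ∀ m, H₀ (φ₀ m) = (e0 m : ℂ) • φ₀ m)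
    (h1 : ∀ n, H₁ (φ₁ n) = (e1 n : ℂ) • φ₁ n)
    (𝒰 : EuclideanSpace ℂ (Fin N) ≃ₗᵢ[ℂ] EuclideanSpace ℂ (Fin N))
    (β : ℝ) (hβ : 0 ≤ β) (ε : ℝ) (hε : 0 < ε)
    (Z₀ Z₁ : ℝ)
    (hZ₀ : Z₀ = ∑ m, Real.exp (-β * e0 m))
    (hZ₁ : Z₁ = ∑ n, Real.exp (-β * e1 n))
    (Vu : EuclideanSpace ℂ (Fin N) →L[ℂ] EuclideanSpace ℂ (Fin N))
    (hVu : ∀ ξ, Vu ξ = H₁ ξ - 𝒰 (H₀ (𝒰.symm ξ)))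
    (P : ℝ → ℝ)
    (hP : ∀ ω, P ω = ∑ p ∈ Finset.univ.filter
        (fun p : Fin N × Fin N => e1 p.2 - e0 p.1 = ω),
        ‖(inner ℂ (φ₁ p.2) (𝒰 (φ₀ p.1)) : ℂ)‖ ^ 2 * Real.exp (-β * e0 p.1) / Z₀)
    (wl : ℝ) (hwl : wl ≤ -(6 * ‖Vu‖) / ε) :
    ∑ ω ∈ (Finset.image (fun p : Fin N × Fin N => e1 p.2 - e0 p.1)
        Finset.univ).filter (fun ω => ω < wl),
      P ω * Real.exp (-β * ω)
      ≤ (ε / 6) ^ 2 * (Z₁ / Z₀) := by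
  classical
  have hZ₀nn : 0 ≤ Z₀ := by rw [hZ₀]; positivity
  have hZ₁nn : 0 ≤ Z₁ := by rw [hZ₁]; positivity
  have hH₁sa : IsSelfAdjoint H₁ := by
    rw [hH₁]
    have hadd : ContinuousLinearMap.adjoint (H₀ + V) = H₀ + V := by
      rw [map_add, hH₀.adjoint_eq, hV.adjoint_eq]
    exact hadd
  -- abbreviations
  set f : Fin N × Fin N → ℝ := fun p => e1 p.2 - e0 p.1 with hfdef
  set g : Fin N × Fin N → ℝ :=
    fun p => ‖(inner ℂ (φ₁ p.2) (𝒰 (φ₀ p.1)) : ℂ)‖ ^ 2 * Real.exp (-β * e1 p.2) with hgdef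
  have hgnn : ∀ p, 0 ≤ g p := fun p => by positivity
  -- key pointwise identity
  have key : ∀ p : Fin N × Fin N,
      (inner ℂ (φ₁ p.2) (Vu (𝒰 (φ₀ p.1))) : ℂ)
        = ((f p : ℝ) : ℂ) * (inner ℂ (φ₁ p.2) (𝒰 (φ₀ p.1)) : ℂ) := by
    rintro ⟨m, n⟩
    rw [hVu, 𝒰.symm_apply_apply, h0, inner_sub_right]
    have hH : (inner ℂ (φ₁ n) (H₁ (𝒰 (φ₀ m))) : ℂ)
        = (e1 n : ℂ) * inner ℂ (φ₁ n) (𝒰 (φ₀ m)) := by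
      rw [← ContinuousLinearMap.adjoint_inner_left, hH₁sa.adjoint_eq, h1,
        inner_smul_left, Complex.conj_ofReal]
    rw [hH, map_smul, inner_smul_right, Complex.ofReal_sub]
    ring
  -- Parseval / Bessel bound
  have bessel : ∀ n, ∑ m, ‖(inner ℂ (φ₁ n) (Vu (𝒰 (φ₀ m))) : ℂ)‖ ^ 2 ≤ ‖Vu‖ ^ 2 := by
    intro n
    set x := ContinuousLinearMap.adjoint Vu (φ₁ n) with hx
    have hrw : ∀ m, ‖(inner ℂ (φ₁ n) (Vu (𝒰 (φ₀ m))) : ℂ)‖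
        = ‖(inner ℂ ((φ₀.map 𝒰) m) x : ℂ)‖ := by
      intro m
      rw [hx, ← ContinuousLinearMap.adjoint_inner_left, ← norm_inner_symm,
        OrthonormalBasis.map_apply]
    calc ∑ m, ‖(inner ℂ (φ₁ n) (Vu (𝒰 (φ₀ m))) : ℂ)‖ ^ 2
        = ∑ m, ‖(inner ℂ ((φ₀.map 𝒰) m) x : ℂ)‖ ^ 2 := by simp_rw [hrw]
      _ = ‖x‖ ^ 2 := by
          simp_rw [← (φ₀.map 𝒰).repr_apply_apply]
          have h : ∑ m, ‖(φ₀.map 𝒰).repr x m‖ ^ 2 = ‖(φ₀.map 𝒰).repr x‖ ^ 2 := by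
            rw [EuclideanSpace.norm_eq, Real.sq_sqrt (by positivity)]
          rw [h, (φ₀.map 𝒰).repr.norm_map x]
      _ ≤ ‖Vu‖ ^ 2 := by
          have h1' : ‖x‖ ≤ ‖Vu‖ := by
            calc ‖x‖ ≤ ‖ContinuousLinearMap.adjoint Vu‖ * ‖φ₁ n‖ :=
                  (ContinuousLinearMap.adjoint Vu).le_opNorm _
              _ = ‖Vu‖ := by
                  rw [φ₁.orthonormal.1 n, mul_one,
                    ContinuousLinearMap.adjoint.norm_map]
          exact pow_le_pow_left₀ (norm_nonneg _) h1' 2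
  -- second moment bound
  have secmom : ∑ p : Fin N × Fin N, (f p) ^ 2 * g p ≤ ‖Vu‖ ^ 2 * Z₁ := by
    have hterm : ∀ p : Fin N × Fin N, (f p) ^ 2 * g p
        = ‖(inner ℂ (φ₁ p.2) (Vu (𝒰 (φ₀ p.1))) : ℂ)‖ ^ 2 * Real.exp (-β * e1 p.2) := by
      intro p
      rw [key p, norm_mul, mul_pow, Complex.norm_real, Real.norm_eq_abs, sq_abs,
        hgdef]
      ring
    calc ∑ p : Fin N × Fin N, (f p) ^ 2 * g p
        = ∑ p : Fin N × Fin N,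
            ‖(inner ℂ (φ₁ p.2) (Vu (𝒰 (φ₀ p.1))) : ℂ)‖ ^ 2 * Real.exp (-β * e1 p.2) := by
          exact Finset.sum_congr rfl fun p _ => hterm p
      _ = ∑ n, (∑ m, ‖(inner ℂ (φ₁ n) (Vu (𝒰 (φ₀ m))) : ℂ)‖ ^ 2) * Real.exp (-β * e1 n) := by
          rw [Fintype.sum_prod_type, Finset.sum_comm]
          simp_rw [Finset.sum_mul]
      _ ≤ ∑ n, ‖Vu‖ ^ 2 * Real.exp (-β * e1 n) := by
          refine Finset.sum_le_sum fun n _ => ?_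
          exact mul_le_mul_of_nonneg_right (bessel n) (Real.exp_nonneg _)
      _ = ‖Vu‖ ^ 2 * Z₁ := by rw [← Finset.mul_sum, hZ₁]
  -- rewrite the LHS
  set t : Finset ℝ := (Finset.image f Finset.univ).filter (fun ω => ω < wl) with htdef
  have hstep1 : ∀ ω ∈ t, P ω * Real.exp (-β * ω)
      = ∑ p ∈ Finset.univ.filter (fun p => f p = ω), g p / Z₀ := by
    intro ω _
    rw [hP, Finset.sum_mul]
    refine Finset.sum_congr rfl fun p hp => ?_
    have hfp : f p = ω := (Finset.mem_filter.mp hp).2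
    have hexp : Real.exp (-β * e0 p.1) * Real.exp (-β * ω) = Real.exp (-β * e1 p.2) := by
      rw [← Real.exp_add, ← hfp]
      congr 1
      simp only [hfdef]
      ring
    rw [div_mul_eq_mul_div, mul_assoc, hexp]
  have hLHS : ∑ ω ∈ t, P ω * Real.exp (-β * ω)
      = (∑ p ∈ Finset.univ.filter (fun p => f p < wl), g p) / Z₀ := by
    rw [Finset.sum_congr rfl hstep1,
      Finset.sum_fiberwise_eq_sum_filter Finset.univ t f (fun p => g p / Z₀)]
    have hfilter : Finset.univ.filter (fun p => f p ∈ t)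
        = Finset.univ.filter (fun p => f p < wl) := by
      refine Finset.filter_congr fun p _ => ?_
      simp only [htdef, Finset.mem_filter, Finset.mem_image]
      exact ⟨fun h => h.2, fun h => ⟨⟨p, Finset.mem_univ p, rfl⟩, h⟩⟩
    rw [hfilter, ← Finset.sum_div]
  rw [hLHS]
  set S : ℝ := ∑ p ∈ Finset.univ.filter (fun p => f p < wl), g p with hSdef
  have hSnn : 0 ≤ S := Finset.sum_nonneg fun p _ => hgnn p
  have hwl0 : wl ≤ 0 := by
    have h6 : 0 ≤ 6 * ‖Vu‖ := by positivity
    calc wl ≤ -(6 * ‖Vu‖) / ε := hwl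
      _ ≤ 0 := div_nonpos_of_nonpos_of_nonneg (by linarith) hε.le
  rcases lt_or_eq_of_le hwl0 with hlt | heq
  · -- wl < 0
    have hchain : wl ^ 2 * S ≤ ‖Vu‖ ^ 2 * Z₁ := by
      calc wl ^ 2 * S = ∑ p ∈ Finset.univ.filter (fun p => f p < wl), wl ^ 2 * g p := by
            rw [Finset.mul_sum]
        _ ≤ ∑ p ∈ Finset.univ.filter (fun p => f p < wl), (f p) ^ 2 * g p := by
            refine Finset.sum_le_sum fun p hp => ?_
            have hfp : f p < wl := (Finset.mem_filter.mp hp).2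
            have hsq : wl ^ 2 ≤ (f p) ^ 2 := by nlinarith
            exact mul_le_mul_of_nonneg_right hsq (hgnn p)
        _ ≤ ∑ p : Fin N × Fin N, (f p) ^ 2 * g p := by
            refine Finset.sum_le_sum_of_subset_of_nonneg (Finset.filter_subset _ _)
              fun p _ _ => ?_
            have := hgnn p
            positivity
        _ ≤ ‖Vu‖ ^ 2 * Z₁ := secmom
    have hnormsq : ‖Vu‖ ^ 2 ≤ (ε / 6) ^ 2 * wl ^ 2 := by
      have h6 : wl * ε ≤ -(6 * ‖Vu‖) := (le_div_iff₀ hε).mp hwl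
      nlinarith [norm_nonneg Vu]
    have hS : S ≤ (ε / 6) ^ 2 * Z₁ := by
      have h2 : wl ^ 2 * S ≤ wl ^ 2 * ((ε / 6) ^ 2 * Z₁) := by
        calc wl ^ 2 * S ≤ ‖Vu‖ ^ 2 * Z₁ := hchain
          _ ≤ (ε / 6) ^ 2 * wl ^ 2 * Z₁ := mul_le_mul_of_nonneg_right hnormsq hZ₁nn
          _ = wl ^ 2 * ((ε / 6) ^ 2 * Z₁) := by ring
      exact le_of_mul_le_mul_left h2 (by nlinarith)
    calc S / Z₀ ≤ ((ε / 6) ^ 2 * Z₁) / Z₀ := div_le_div_of_nonneg_denom hS hZ₀nn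
      _ = (ε / 6) ^ 2 * (Z₁ / Z₀) := by rw [mul_div_assoc]
  · -- wl = 0
    have hVu0 : Vu = 0 := by
      have h6 : wl * ε ≤ -(6 * ‖Vu‖) := (le_div_iff₀ hε).mp hwl
      rw [heq, zero_mul] at h6
      have : ‖Vu‖ ≤ 0 := by linarith
      exact norm_eq_zero.mp (le_antisymm this (norm_nonneg _))
    have hS0 : S = 0 := by
      refine Finset.sum_eq_zero fun p hp => ?_
      have hfp : f p < wl := (Finset.mem_filter.mp hp).2
      have hfne : (f p : ℝ) ≠ 0 := ne_of_lt (heq ▸ hfp)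
      have h0' : ((f p : ℝ) : ℂ) * (inner ℂ (φ₁ p.2) (𝒰 (φ₀ p.1)) : ℂ) = 0 := by
        rw [← key p, hVu0]; simp
      have hc0 : (inner ℂ (φ₁ p.2) (𝒰 (φ₀ p.1)) : ℂ) = 0 := by
        rcases mul_eq_zero.mp h0' with h | h
        · exact absurd (Complex.ofReal_eq_zero.mp h) hfne
        · exact h
      show ‖(inner ℂ (φ₁ p.2) (𝒰 (φ₀ p.1)) : ℂ)‖ ^ 2 * Real.exp (-β * e1 p.2) = 0
      rw [hc0, norm_zero]
      ring
    rw [hS0, zero_div]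
    positivity
end

section
/- Work cutoff for commuting Hamiltonians: If H₀ and H₁ = H₀ + V commute and 𝒰 = 1, then every work value w with P(w) > 0 satisfies w ≥ −‖V‖; consequently ∑_{w < wₗ} P(w) e^{-β(w − ΔA)} = 0 for any wₗ ≤ −‖V‖. -/
open scoped BigOperators

/-- **Work cutoff for commuting Hamiltonians** (Theorem 3 of the paper).
If `H₀` and `H₁ = H₀ + V` commute and `𝒰 = 1`, every work value with nonzero
probability satisfies `w ≥ −‖V‖` (i.e. overlapping eigenvectors have
`e1ₙ − e0ₘ ≥ −‖V‖`); consequently `∑_{w < wl} P(w) e^{-β(w − ΔA)} = 0` for every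
`wl ≤ −‖V‖`. -/
theorem work_cutoff_commuting_hamiltonians {N : ℕ}
    (H₀ H₁ V : EuclideanSpace ℂ (Fin N) →L[ℂ] EuclideanSpace ℂ (Fin N))
    (hH₀ : IsSelfAdjoint H₀) (hH₁self : IsSelfAdjoint H₁) (hH₁ : H₁ = H₀ + V)
    (hcomm : H₀ ∘L H₁ = H₁ ∘L H₀)
    (φ₀ φ₁ : OrthonormalBasis (Fin N) ℂ (EuclideanSpace ℂ (Fin N)))
    (e0 e1 : Fin N → ℝ)
    (h0 : ∀ m, H₀ (φ₀ m) = (e0 m : ℂ) • φ₀ m)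
    (h1 : ∀ n, H₁ (φ₁ n) = (e1 n : ℂ) • φ₁ n)
    (β : ℝ) (hβ : 0 ≤ β)
    (Z₀ Z₁ : ℝ)
    (hZ₀ : Z₀ = ∑ m, Real.exp (-β * e0 m))
    (hZ₁ : Z₁ = ∑ n, Real.exp (-β * e1 n))
    (P : ℝ → ℝ)
    (hP : ∀ ω, P ω = ∑ p ∈ Finset.univ.filter
        (fun p : Fin N × Fin N => e1 p.2 - e0 p.1 = ω),
        ‖(inner ℂ (φ₁ p.2) (φ₀ p.1) : ℂ)‖ ^ 2 * Real.exp (-β * e0 p.1) / Z₀) :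
    (∀ m n, (inner ℂ (φ₁ n) (φ₀ m) : ℂ) ≠ 0 → -‖V‖ ≤ e1 n - e0 m) ∧
    (∀ wl, wl ≤ -‖V‖ →
      ∑ ω ∈ (Finset.image (fun p : Fin N × Fin N => e1 p.2 - e0 p.1)
          Finset.univ).filter (fun ω => ω < wl),
        P ω * Real.exp (-β * (ω - (-(1 / β) * Real.log (Z₁ / Z₀)))) = 0) := by
  have hadj : ContinuousLinearMap.adjoint H₁ = H₁ :=
    ContinuousLinearMap.isSelfAdjoint_iff'.mp hH₁self
  have hsym : ∀ z y : EuclideanSpace ℂ (Fin N),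
      (inner ℂ (H₁ z) y : ℂ) = inner ℂ z (H₁ y) := by
    intro z y
    conv_lhs => rw [← hadj]
    exact ContinuousLinearMap.adjoint_inner_left H₁ y z
  have main : ∀ m n, (inner ℂ (φ₁ n) (φ₀ m) : ℂ) ≠ 0 → -‖V‖ ≤ e1 n - e0 m := by
    intro m n hc
    set T : EuclideanSpace ℂ (Fin N) →L[ℂ] EuclideanSpace ℂ (Fin N) :=
      H₀ - (e0 m : ℂ) • ContinuousLinearMap.id ℂ _ with hT
    set E : Submodule ℂ (EuclideanSpace ℂ (Fin N)) := LinearMap.ker (T : EuclideanSpace ℂ (Fin N) →ₗ[ℂ] EuclideanSpace ℂ (Fin N)) with hE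
    have hmemE : ∀ z, z ∈ E ↔ H₀ z = (e0 m : ℂ) • z := by
      intro z
      simp [hE, hT, LinearMap.mem_ker, sub_eq_zero]
    have hE1 : ∀ z ∈ E, H₁ z ∈ E := by
      intro z hz
      rw [hmemE] at hz ⊢
      have hcz : H₀ (H₁ z) = H₁ (H₀ z) := by
        have := congrArg (fun A : EuclideanSpace ℂ (Fin N) →L[ℂ] _ => A z) hcomm
        simpa using this
      rw [hcz, hz, map_smul]
    have hE1' : ∀ y ∈ Eᗮ, H₁ y ∈ Eᗮ := by
      intro y hy
      rw [Submodule.mem_orthogonal]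
      intro u hu
      rw [← hsym u y]
      exact (Submodule.mem_orthogonal E y).mp hy (H₁ u) (hE1 u hu)
    set x : EuclideanSpace ℂ (Fin N) := (E.orthogonalProjectionOnto (φ₁ n) : EuclideanSpace ℂ (Fin N)) with hx
    have hxE : x ∈ E := SetLike.coe_mem _
    set y : EuclideanSpace ℂ (Fin N) := φ₁ n - x with hy
    have hyE : y ∈ Eᗮ := E.sub_starProjection_mem_orthogonal (φ₁ n)
    have hphi : φ₁ n = x + y := by rw [hy]; abel
    -- x is an eigenvector of H₁ with eigenvalue e1 n
    have hsum : H₁ x + H₁ y = (e1 n : ℂ) • x + (e1 n : ℂ) • y := by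
      rw [← map_add, ← smul_add, ← hphi, h1 n]
    have hw : H₁ x - (e1 n : ℂ) • x = 0 := by
      set w : EuclideanSpace ℂ (Fin N) := H₁ x - (e1 n : ℂ) • x with hwdef
      have hwE : w ∈ E := Submodule.sub_mem E (hE1 x hxE) (Submodule.smul_mem E _ hxE)
      have hweq : w = -(H₁ y - (e1 n : ℂ) • y) := by
        rw [hwdef]
        have := hsum
        abel_nf
        linear_combination (norm := module) this
      have hwO : w ∈ Eᗮ := by
        rw [hweq]
        exact Submodule.neg_mem _ (Submodule.sub_mem _ (hE1' y hyE) (Submodule.smul_mem _ _ hyE))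
      have : (inner ℂ w w : ℂ) = 0 := (Submodule.mem_orthogonal E w).mp hwO w hwE
      exact inner_self_eq_zero.mp this
    have hH1x : H₁ x = (e1 n : ℂ) • x := by
      have := hw
      rw [sub_eq_zero] at this
      exact this
    -- x ≠ 0
    have hphi0 : φ₀ m ∈ E := (hmemE _).mpr (h0 m)
    have hinner_eq : (inner ℂ (φ₁ n) (φ₀ m) : ℂ) = inner ℂ x (φ₀ m) := by
      rw [hphi, inner_add_left]
      have : (inner ℂ y (φ₀ m) : ℂ) = 0 :=
        (Submodule.mem_orthogonal' E y).mp hyE (φ₀ m) hphi0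
      rw [this, add_zero]
    have hx0 : x ≠ 0 := by
      intro h
      apply hc
      rw [hinner_eq, h, inner_zero_left]
    -- V x = (e1 n - e0 m) • x
    have hVx : V x = ((e1 n - e0 m : ℝ) : ℂ) • x := by
      have hH0x : H₀ x = (e0 m : ℂ) • x := (hmemE x).mp hxE
      have hV : V = H₁ - H₀ := by rw [hH₁]; abel
      rw [hV, ContinuousLinearMap.sub_apply, hH1x, hH0x, ← sub_smul]
      norm_cast
    have hnorm : ‖V x‖ = |e1 n - e0 m| * ‖x‖ := by
      rw [hVx, norm_smul, Complex.norm_real, Real.norm_eq_abs]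
    have hle : ‖V x‖ ≤ ‖V‖ * ‖x‖ := V.le_opNorm x
    have hxpos : 0 < ‖x‖ := norm_pos_iff.mpr hx0
    have habs : |e1 n - e0 m| ≤ ‖V‖ := by
      rw [hnorm] at hle
      exact le_of_mul_le_mul_right hle hxpos
    have := abs_le.mp habs
    linarith [this.1]
  refine ⟨main, fun wl hwl => ?_⟩
  apply Finset.sum_eq_zero
  intro ω hω
  simp only [Finset.mem_filter, Finset.mem_image] at hω
  have hlt : ω < wl := hω.2
  have hPω : P ω = 0 := by
    rw [hP]
    apply Finset.sum_eq_zero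
    intro q hq
    simp only [Finset.mem_filter] at hq
    by_contra hne
    have hinner : (inner ℂ (φ₁ q.2) (φ₀ q.1) : ℂ) ≠ 0 := by
      intro h0'
      apply hne
      rw [h0']
      simp
    have hge := main q.1 q.2 hinner
    rw [hq.2] at hge
    linarith
  rw [hPω, zero_mul]
end

section
/- Norm of interpolated exponential product: For Hermitian H₀ and V on ℂ^N and a ≥ 0, ‖e^{-a(H₀+V)} e^{aH₀}‖ ≤ exp(∫₀^a ‖e^{-a'H₀} V e^{a'H₀}‖ da') ≤ exp(a · max_{a'∈[0,a]} ‖e^{-a'H₀} V e^{a'H₀}‖). -/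
set_option maxHeartbeats 1600000
set_option synthInstance.maxHeartbeats 400000

open Set intervalIntegral MeasureTheory Filter Topology

section Aux

variable {N : ℕ}

local notation "E" => EuclideanSpace ℂ (Fin N)

private lemma expCR (t : ℝ) (X : E →L[ℂ] E) :
    NormedSpace.exp ((t : ℂ) • X) = NormedSpace.exp (t • X) := by
  congr 1

end Aux

/-- **Norm of the interpolated exponential product:** for Hermitian `H₀, V` and `a ≥ 0`,
`‖e^{-a(H₀+V)} e^{aH₀}‖ ≤ exp(∫₀^a ‖e^{-tH₀} V e^{tH₀}‖ dt)
  ≤ exp(a · sup_{t∈[0,a]} ‖e^{-tH₀} V e^{tH₀}‖)`. -/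
theorem norm_interpolated_exponential_product {N : ℕ}
    (H₀ V : EuclideanSpace ℂ (Fin N) →L[ℂ] EuclideanSpace ℂ (Fin N))
    (hH₀ : IsSelfAdjoint H₀) (hV : IsSelfAdjoint V)
    (a : ℝ) (ha : 0 ≤ a) :
    ‖NormedSpace.exp (((-a : ℝ) : ℂ) • (H₀ + V)) *
        NormedSpace.exp ((a : ℂ) • H₀)‖
      ≤ Real.exp (∫ t in (0:ℝ)..a,
          ‖NormedSpace.exp (((-t : ℝ) : ℂ) • H₀) ∘L V ∘L
              NormedSpace.exp (((t : ℝ) : ℂ) • H₀)‖) ∧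
    Real.exp (∫ t in (0:ℝ)..a,
        ‖NormedSpace.exp (((-t : ℝ) : ℂ) • H₀) ∘L V ∘L
            NormedSpace.exp (((t : ℝ) : ℂ) • H₀)‖)
      ≤ Real.exp (a * ⨆ t : Set.Icc (0:ℝ) a,
          ‖NormedSpace.exp (((-(t : ℝ)) : ℂ) • H₀) ∘L V ∘L
              NormedSpace.exp ((((t : ℝ)) : ℂ) • H₀)‖) := by
  classical
  letI : NormedAlgebra ℚ (EuclideanSpace ℂ (Fin N) →L[ℂ] EuclideanSpace ℂ (Fin N)) :=
    NormedAlgebra.restrictScalars ℚ ℝ _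
  set A := H₀ + V with hA
  -- the interpolating function and the "interaction picture" potential
  set F : ℝ → _ := fun t => NormedSpace.exp ((-t) • A) * NormedSpace.exp (t • H₀) with hFdef
  set W : ℝ → _ := fun t =>
    NormedSpace.exp ((-t) • H₀) * (V * NormedSpace.exp (t • H₀)) with hWdef
  set g : ℝ → ℝ := fun t => ‖W t‖ with hgdef
  -- rewriting the complex exponentials in the statement as real ones
  have hWeq : ∀ t : ℝ,
      (NormedSpace.exp (((-t : ℝ) : ℂ) • H₀) ∘L V ∘L
        NormedSpace.exp (((t : ℝ) : ℂ) • H₀)) = W t := by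
    intro t
    rw [expCR, expCR]
    rfl
  -- continuity of `g` and `W`
  have hexpc : ∀ X : EuclideanSpace ℂ (Fin N) →L[ℂ] EuclideanSpace ℂ (Fin N),
      Continuous fun t : ℝ => NormedSpace.exp (t • X) := fun X =>
    NormedSpace.exp_continuous.comp (continuous_id.smul continuous_const)
  have hWc : Continuous W := by
    exact ((hexpc H₀).comp continuous_neg).mul (continuous_const.mul (hexpc H₀))
  have hgc : Continuous g := hWc.norm
  -- `exp(tH₀) exp(-tH₀) = 1`
  have hinv : ∀ t : ℝ,
      NormedSpace.exp (t • H₀) * NormedSpace.exp ((-t) • H₀) = 1 := by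
    intro t
    have h := NormedSpace.exp_add_of_commute ((Commute.refl (t • H₀)).neg_right)
    rw [add_neg_cancel, NormedSpace.exp_zero] at h
    rw [show (-t) • H₀ = -(t • H₀) from neg_smul t H₀]
    exact h.symm
  -- `F t * W t = exp(-tA) V exp(tH₀)`
  have hFW : ∀ t : ℝ, F t * W t = NormedSpace.exp ((-t) • A) * (V * NormedSpace.exp (t • H₀)) := by
    intro t
    simp only [hFdef, hWdef, mul_assoc]
    rw [← mul_assoc (NormedSpace.exp (t • H₀)) (NormedSpace.exp ((-t) • H₀)), hinv, one_mul]
  -- derivative of F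
  have hF' : ∀ t : ℝ, HasDerivAt F (-(F t * W t)) t := by
    intro t
    have h1 : HasDerivAt (fun u : ℝ => NormedSpace.exp ((-u) • A))
        (-(NormedSpace.exp ((-t) • A) * A)) t := by
      have h := (hasDerivAt_exp_smul_const (𝕂 := ℝ) A (-t)).scomp t (hasDerivAt_neg t)
      simp only [Function.comp_def, neg_one_smul, ← neg_smul] at h
      exact h
    have h2 : HasDerivAt (fun u : ℝ => NormedSpace.exp (u • H₀))
        (H₀ * NormedSpace.exp (t • H₀)) t := hasDerivAt_exp_smul_const' (𝕂 := ℝ) H₀ t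
    have := h1.mul h2
    refine this.congr_deriv ?_; symm
    rw [hFW]
    have hnm := neg_mul (NormedSpace.exp ((-t) • A) * A) (NormedSpace.exp (t • H₀))
    rw [hnm, hA, mul_add, add_mul, mul_assoc, mul_assoc]
    abel
  have hFc : Continuous F := by
    exact ((hexpc A).comp continuous_neg).mul (hexpc H₀)
  -- the integral of g
  set I : ℝ := ∫ t in (0:ℝ)..a, g t with hI
  -- main Gronwall-type estimate, with an ε margin
  have main : ∀ ε : ℝ, 0 < ε → ‖F a‖ ≤ (1 + ε) * Real.exp (I + ε * a) := by
    intro ε hε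
    set B : ℝ → ℝ := fun t => (1 + ε) * Real.exp ((∫ s in (0:ℝ)..t, g s) + ε * t) with hB
    have hBpos : ∀ t, 0 < B t := fun t =>
      mul_pos (by linarith) (Real.exp_pos _)
    have hB' : ∀ x : ℝ, HasDerivAt B ((g x + ε) * B x) x := by
      intro x
      have hint : HasDerivAt (fun t => ∫ s in (0:ℝ)..t, g s) (g x) x := by
        exact intervalIntegral.integral_hasDerivAt_right
          (hgc.intervalIntegrable _ _)
          (hgc.stronglyMeasurableAtFilter _ _) hgc.continuousAt
      have h2 : HasDerivAt (fun t : ℝ => (∫ s in (0:ℝ)..t, g s) + ε * t) (g x + ε) x := by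
        have := hint.add ((hasDerivAt_id x).const_mul ε)
        simp only [mul_one] at this
        exact this
      have h3 := (h2.exp).const_mul (1 + ε)
      refine h3.congr_deriv ?_; symm
      simp only [hB]
      ring
    have key : ∀ x ∈ Icc (0:ℝ) a, ‖F x‖ ≤ B x := by
      refine image_norm_le_of_norm_deriv_right_lt_deriv_boundary
        (f := F) (f' := fun t => -(F t * W t))
        hFc.continuousOn (fun x _ => (hF' x).hasDerivWithinAt) ?_ hB' ?_
      · -- ‖F 0‖ ≤ B 0
        have : F 0 = 1 := by
          show NormedSpace.exp ((-(0:ℝ)) • A) * NormedSpace.exp ((0:ℝ) • H₀) = 1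
          have z1 : (0:ℝ) • A = 0 := by module
          have z2 : (0:ℝ) • H₀ = 0 := by module
          rw [neg_zero, z1, z2, NormedSpace.exp_zero, one_mul]
        rw [this]
        have h1 : ‖(1 : EuclideanSpace ℂ (Fin N) →L[ℂ] EuclideanSpace ℂ (Fin N))‖ ≤ 1 :=
          ContinuousLinearMap.norm_id_le
        have : B 0 = 1 + ε := by
          simp [hB, intervalIntegral.integral_same]
        rw [this]; linarith
      · intro x _ hx
        have h1 : ‖-(F x * W x)‖ ≤ ‖F x‖ * g x := by
          rw [norm_neg]; exact norm_mul_le _ _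
        rw [hx] at h1
        calc ‖-(F x * W x)‖ ≤ B x * g x := h1
          _ < (g x + ε) * B x := by
              have h2 : 0 ≤ g x := norm_nonneg _
              have := hBpos x
              nlinarith
    have := key a ⟨ha, le_refl a⟩
    simpa [hB] using this
  -- pass to the limit ε → 0⁺
  have hFa : ‖F a‖ ≤ Real.exp I := by
    have tend : Tendsto (fun ε : ℝ => (1 + ε) * Real.exp (I + ε * a)) (𝓝[>] 0)
        (𝓝 (Real.exp I)) := by
      have hc : Continuous fun ε : ℝ => (1 + ε) * Real.exp (I + ε * a) := by
        exact (continuous_const.add continuous_id).mul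
          ((continuous_const.add (continuous_id.mul continuous_const)).rexp)
      have := (hc.tendsto 0).mono_left (nhdsWithin_le_nhds (s := Set.Ioi (0:ℝ)))
      simpa using this
    refine ge_of_tendsto tend ?_
    filter_upwards [self_mem_nhdsWithin] with ε hε
    exact main ε hε
  constructor
  · -- first inequality
    have hL : NormedSpace.exp (((-a : ℝ) : ℂ) • (H₀ + V)) *
        NormedSpace.exp ((a : ℂ) • H₀) = F a := by
      rw [expCR, expCR]
    rw [hL]
    have : (∫ t in (0:ℝ)..a,
        ‖NormedSpace.exp (((-t : ℝ) : ℂ) • H₀) ∘L V ∘L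
            NormedSpace.exp (((t : ℝ) : ℂ) • H₀)‖) = I := by
      rw [hI]
      congr 1
    rw [this]
    exact hFa
  · -- second inequality
    rw [Real.exp_le_exp]
    have hSeq : (⨆ t : Set.Icc (0:ℝ) a,
        ‖NormedSpace.exp (((-(t : ℝ)) : ℂ) • H₀) ∘L V ∘L
            NormedSpace.exp ((((t : ℝ)) : ℂ) • H₀)‖) = ⨆ t : Set.Icc (0:ℝ) a, g t := by
      congr 1
      funext t
      rw [show ((-(t : ℝ) : ℂ)) = (((-(t : ℝ) : ℝ)) : ℂ) by push_cast; ring]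
      rw [hWeq]
    rw [hSeq]
    have hne : Nonempty (Set.Icc (0:ℝ) a) := ⟨⟨0, le_refl 0, ha⟩⟩
    have hbdd : BddAbove (Set.range fun t : Set.Icc (0:ℝ) a => g t) := by
      rw [← Set.image_eq_range]
      exact (isCompact_Icc.image hgc).bddAbove
    have hle : ∀ t ∈ Icc (0:ℝ) a, g t ≤ ⨆ t : Set.Icc (0:ℝ) a, g t := by
      intro t ht
      exact le_ciSup hbdd ⟨t, ht⟩
    calc (∫ t in (0:ℝ)..a,
        ‖NormedSpace.exp (((-t : ℝ) : ℂ) • H₀) ∘L V ∘L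
            NormedSpace.exp (((t : ℝ) : ℂ) • H₀)‖)
        = ∫ t in (0:ℝ)..a, g t := by
          congr 1
      _ ≤ ∫ _t in (0:ℝ)..a, (⨆ t : Set.Icc (0:ℝ) a, g t) := by
          refine intervalIntegral.integral_mono_on ha (hgc.intervalIntegrable _ _)
            (intervalIntegrable_const) hle
      _ = a * ⨆ t : Set.Icc (0:ℝ) a, g t := by
          rw [intervalIntegral.integral_const]; simp
end

section
/- LCU block-encoding identity: Let U be unitary on a Hilbert space H, αⱼ ∈ ℂ for −J ≤ j ≤ J with α = ∑ⱼ |αⱼ| > 0, and suppose 2J+2 = 2^m. Let B be a unitary on ℂ^{2^m} with B|0⟩ = α^{-1/2} ∑_{j=0}^{2J} (α_{−J+j})^{1/2} |j⟩, R = ∑_{j=0}^{2J+1} |j⟩⟨j| ⊗ U^j, and S = (1 ⊗ U^{−J})(Bᵀ ⊗ 1) R (B ⊗ 1). Then for every |Ψ⟩ ∈ H: (⟨0| ⊗ 1) S (|0⟩ ⊗ |Ψ⟩) = (1/α) ∑_{j=−J}^{J} αⱼ U^j |Ψ⟩. -/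
open scoped BigOperators

/-- **LCU block-encoding identity.**  Let `U` be a unitary on a Hilbert space `H`,
`a : ℤ → ℂ` coefficients with `α = ∑_{|j|≤J} |a j| > 0`, and `2J+2 = 2^m`.  Let `B` be
a unitary matrix whose first column is `(√(a_{−J+j}))_j / √α` (with arbitrary fixed
square roots `sq`, vanishing on the index `2J+1`), let `appB`, `appBT` implement
`B ⊗ 1` and `Bᵀ ⊗ 1` on the direct sum `ℂ^{2J+2} ⊗ H ≅ (Fin (2J+2) → H)`, let `appR`
implement the select operation `∑ⱼ |j⟩⟨j| ⊗ Uʲ`, and `appUJ` implement `1 ⊗ U^{−J}`.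
Then for every `Ψ`, the `|0⟩`-component of
`(1 ⊗ U^{−J}) (Bᵀ ⊗ 1) R (B ⊗ 1) (|0⟩ ⊗ Ψ)` equals `(1/α) ∑_{j=−J}^{J} a j • Uʲ Ψ`. -/
theorem lcu_block_encoding_identity {H : Type*}
    [NormedAddCommGroup H] [InnerProductSpace ℂ H] [CompleteSpace H]
    (U : H ≃ₗᵢ[ℂ] H) (m J : ℕ) (hmJ : 2 * J + 1 + 1 = 2 ^ m)
    (a : ℤ → ℂ) (αtot : ℝ)
    (hαtot : αtot = ∑ j ∈ Finset.Icc (-(J : ℤ)) (J : ℤ), ‖a j‖) (hαpos : 0 < αtot)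
    (sq : Fin (2 * J + 1 + 1) → ℂ)
    (hsq : ∀ j : Fin (2 * J + 1 + 1),
      (sq j) ^ 2 = if (j : ℕ) ≤ 2 * J then a ((j : ℕ) - (J : ℤ)) else 0)
    (B : Matrix (Fin (2 * J + 1 + 1)) (Fin (2 * J + 1 + 1)) ℂ)
    (hB : B ∈ Matrix.unitaryGroup (Fin (2 * J + 1 + 1)) ℂ)
    (hB0 : ∀ j : Fin (2 * J + 1 + 1), B j 0 = sq j / ((Real.sqrt αtot : ℝ) : ℂ))
    (appB appBT appR appUJ : (Fin (2 * J + 1 + 1) → H) → (Fin (2 * J + 1 + 1) → H))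
    (happB : ∀ f i, appB f i = ∑ l, B i l • f l)
    (happBT : ∀ f i, appBT f i = ∑ l, B l i • f l)
    (happR : ∀ f i, appR f i = (U ^ ((i : ℕ) : ℤ)) (f i))
    (happUJ : ∀ f i, appUJ f i = (U ^ (-(J : ℤ))) (f i))
    (Ψ : H) :
    appUJ (appBT (appR (appB (Pi.single 0 Ψ)))) 0
      = ((αtot : ℝ) : ℂ)⁻¹ • ∑ j ∈ Finset.Icc (-(J : ℤ)) (J : ℤ), a j • (U ^ j) Ψ := by
  classical
  have hsqrt : ((Real.sqrt αtot : ℝ) : ℂ) * ((Real.sqrt αtot : ℝ) : ℂ) = (αtot : ℂ) := by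
    rw [← Complex.ofReal_mul, Real.mul_self_sqrt hαpos.le]
  have h1 : ∀ i, appB (Pi.single 0 Ψ) i = B i 0 • Ψ := by
    intro i
    rw [happB, Finset.sum_eq_single 0]
    · rfl
    · intro b _ hb; rw [Pi.single_eq_of_ne hb, smul_zero]
    · simp
  rw [happUJ, happBT, map_sum]
  have step : ∀ l : Fin (2 * J + 1 + 1),
      (U ^ (-(J : ℤ))) (B l 0 • appR (appB (Pi.single 0 Ψ)) l)
        = (((αtot:ℝ):ℂ)⁻¹ * (if (l : ℕ) ≤ 2 * J then a ((l : ℕ) - (J : ℤ)) else 0))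
            • (U ^ (((l : ℕ) : ℤ) - (J : ℤ))) Ψ := by
    intro l
    rw [happR, h1, map_smul, map_smul, map_smul]
    have hU : (U ^ (-(J:ℤ))) ((U ^ ((l:ℕ):ℤ)) Ψ) = (U ^ (((l:ℕ):ℤ) - (J:ℤ))) Ψ := by
      rw [sub_eq_neg_add, zpow_add]
      rfl
    rw [hU, smul_smul]
    congr 1
    rw [hB0 l, div_mul_div_comm, ← pow_two, hsq l, hsqrt, div_eq_inv_mul]
  rw [Finset.sum_congr rfl (fun l _ => step l)]
  have hrhs : (((αtot:ℝ):ℂ))⁻¹ • ∑ j ∈ Finset.Icc (-(J : ℤ)) (J : ℤ), a j • (U ^ j) Ψ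
      = ∑ j ∈ Finset.Icc (-(J : ℤ)) (J : ℤ), (((αtot:ℝ):ℂ)⁻¹ * a j) • (U ^ j) Ψ := by
    rw [Finset.smul_sum]
    exact Finset.sum_congr rfl (fun j _ => (mul_smul _ _ _).symm)
  rw [hrhs]
  rw [Fin.sum_univ_eq_sum_range
    (fun l : ℕ => (((αtot:ℝ):ℂ)⁻¹ * (if l ≤ 2 * J then a ((l : ℤ) - (J : ℤ)) else 0))
      • (U ^ ((l : ℤ) - (J : ℤ))) Ψ)]
  rw [Finset.sum_range_succ]
  rw [if_neg (by omega : ¬ 2 * J + 1 ≤ 2 * J), mul_zero, zero_smul, add_zero]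
  refine Finset.sum_nbij' (fun l => (l : ℤ) - (J : ℤ)) (fun k => (k + (J : ℤ)).toNat)
    ?_ ?_ ?_ ?_ ?_
  · intro l hl
    simp only [Finset.mem_range] at hl
    simp only [Finset.mem_Icc]
    omega
  · intro k hk
    simp only [Finset.mem_Icc] at hk
    simp only [Finset.mem_range]
    omega
  · intro l hl
    simp only [Finset.mem_range] at hl
    show ((l : ℤ) - (J : ℤ) + (J : ℤ)).toNat = l
    omega
  · intro k hk
    simp only [Finset.mem_Icc] at hk
    show (((k + (J : ℤ)).toNat : ℤ)) - (J : ℤ) = k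
    omega
  · intro l hl
    simp only [Finset.mem_range] at hl
    rw [if_pos (by omega)]
end
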